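/- arXiv:2006.05802 — 6 statements merged into one kernel-verified Lean document; each statement's English description precedes it below -/
import Mathlib

section
/- Let K : X → Y be a bounded operator between Banach spaces and let Y₀ be a closed subspace of Y such that Q_{Y₀} ∘ K is surjective, where Q_{Y₀} : Y → Y/Y₀ is the quotient map. If E is a closed subspace of X such that K⁻¹(Y₀) ⊆ E, then Y contains a closed subspace F such that Y₀ ⊆ F and E = K⁻¹(F). Moreover, if E is infinite-codimensional in X, then F is infinite-codimensional in Y. -/
open Function

/-- `T` is upper semi-Fredholm: finite-dimensional kernel and closed range. -/
def UpperSemiFredholm {X Y : Type*} [NormedAddCommGroup X] [NormedSpace ℝ X]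
    [NormedAddCommGroup Y] [NormedSpace ℝ Y] (T : X →L[ℝ] Y) : Prop :=
  FiniteDimensional ℝ (LinearMap.ker (T : X →ₗ[ℝ] Y)) ∧ IsClosed (LinearMap.range (T : X →ₗ[ℝ] Y) : Set Y)

/-- `T` is lower semi-Fredholm: closed range of finite codimension. -/
def LowerSemiFredholm {X Y : Type*} [NormedAddCommGroup X] [NormedSpace ℝ X]
    [NormedAddCommGroup Y] [NormedSpace ℝ Y] (T : X →L[ℝ] Y) : Prop :=
  IsClosed (LinearMap.range (T : X →ₗ[ℝ] Y) : Set Y) ∧ FiniteDimensional ℝ (Y ⧸ LinearMap.range (T : X →ₗ[ℝ] Y))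

/-- The perturbation class of the upper semi-Fredholm operators. -/
def PertUpperSemiFredholm {X Y : Type*} [NormedAddCommGroup X] [NormedSpace ℝ X]
    [NormedAddCommGroup Y] [NormedSpace ℝ Y] (K : X →L[ℝ] Y) : Prop :=
  ∀ T : X →L[ℝ] Y, UpperSemiFredholm T → UpperSemiFredholm (T + K)

/-- The perturbation class of the lower semi-Fredholm operators. -/
def PertLowerSemiFredholm {X Y : Type*} [NormedAddCommGroup X] [NormedSpace ℝ X]
    [NormedAddCommGroup Y] [NormedSpace ℝ Y] (K : X →L[ℝ] Y) : Prop :=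
  ∀ T : X →L[ℝ] Y, LowerSemiFredholm T → LowerSemiFredholm (T + K)

/-- `K` is strictly singular: it is an isomorphism (bounded below) on no
infinite-dimensional closed subspace. -/
def StrictlySingular {X Y : Type*} [NormedAddCommGroup X] [NormedSpace ℝ X]
    [NormedAddCommGroup Y] [NormedSpace ℝ Y] (K : X →L[ℝ] Y) : Prop :=
  ¬ ∃ U : Submodule ℝ X, IsClosed (U : Set X) ∧ ¬ FiniteDimensional ℝ U ∧
      ∃ c : ℝ, 0 < c ∧ ∀ u ∈ U, c * ‖u‖ ≤ ‖K u‖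

/-- `K` is strictly cosingular: its composition with the quotient map of a closed
infinite-codimensional subspace is never surjective. -/
def StrictlyCosingular {X Y : Type*} [NormedAddCommGroup X] [NormedSpace ℝ X]
    [NormedAddCommGroup Y] [NormedSpace ℝ Y] (K : X →L[ℝ] Y) : Prop :=
  ¬ ∃ Z : Submodule ℝ Y, IsClosed (Z : Set Y) ∧ ¬ FiniteDimensional ℝ (Y ⧸ Z) ∧
      Surjective (Z.mkQ ∘ K)

/-- A Banach space is subprojective if every closed infinite-dimensional subspace
contains an infinite-dimensional closed complemented subspace. -/
def Subprojective (X : Type*) [NormedAddCommGroup X] [NormedSpace ℝ X] : Prop :=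
  ∀ U : Submodule ℝ X, IsClosed (U : Set X) → ¬ FiniteDimensional ℝ U →
    ∃ V : Submodule ℝ X, V ≤ U ∧ IsClosed (V : Set X) ∧ ¬ FiniteDimensional ℝ V ∧
      V.ClosedComplemented

/-- A Banach space is superprojective if every closed infinite-codimensional subspace
is contained in a closed infinite-codimensional complemented subspace. -/
def Superprojective (X : Type*) [SeminormedAddCommGroup X] [NormedSpace ℝ X] : Prop :=
  ∀ Z : Submodule ℝ X, IsClosed (Z : Set X) → ¬ FiniteDimensional ℝ (X ⧸ Z) →
    ∃ W : Submodule ℝ X, Z ≤ W ∧ IsClosed (W : Set X) ∧ ¬ FiniteDimensional ℝ (X ⧸ W) ∧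
      W.ClosedComplemented

open Topology in
theorem exists_closed_subspace_preimage
    {X Y : Type*} [NormedAddCommGroup X] [NormedSpace ℝ X] [CompleteSpace X]
    [NormedAddCommGroup Y] [NormedSpace ℝ Y] [CompleteSpace Y]
    (K : X →L[ℝ] Y) (Y₀ : Submodule ℝ Y) (hY₀ : IsClosed (Y₀ : Set Y))
    (hsurj : Surjective (Y₀.mkQ ∘ K))
    (E : Submodule ℝ X) (hE : IsClosed (E : Set X)) (hsub : Y₀.comap (K : X →ₗ[ℝ] Y) ≤ E) :
    ∃ F : Submodule ℝ Y, IsClosed (F : Set Y) ∧ Y₀ ≤ F ∧ E = F.comap (K : X →ₗ[ℝ] Y) ∧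
      (¬ FiniteDimensional ℝ (X ⧸ E) → ¬ FiniteDimensional ℝ (Y ⧸ F)) := by
  haveI : IsClosed (Y₀ : Set Y) := hY₀
  let Qc : Y →L[ℝ] Y ⧸ Y₀ := ⟨Y₀.mkQ, continuous_quot_mk⟩
  let S : X →L[ℝ] Y ⧸ Y₀ := Qc.comp K
  have hSsurj : Surjective S := hsurj
  have hkerS : LinearMap.ker (S : X →ₗ[ℝ] Y ⧸ Y₀) ≤ E := by
    intro x hx
    exact hsub (by simpa [S, Qc, Submodule.Quotient.mk_eq_zero] using hx)
  have hquot : IsQuotientMap S := S.isQuotientMap hSsurj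
  have hpre : ⇑S ⁻¹' (⇑S '' (E : Set X)) = (E : Set X) := by
    apply Set.Subset.antisymm
    · rintro x ⟨e, he, hxe⟩
      have hk : x - e ∈ LinearMap.ker (S : X →ₗ[ℝ] Y ⧸ Y₀) := by
        simp [LinearMap.mem_ker, map_sub, hxe]
      have := hkerS hk
      simpa using E.add_mem this he
    · exact Set.subset_preimage_image _ _
  have hSEclosed : IsClosed (⇑S '' (E : Set X)) := by
    rw [← hquot.isClosed_preimage, hpre]; exact hE
  set F : Submodule ℝ Y := (E.map (S : X →ₗ[ℝ] Y ⧸ Y₀)).comap Y₀.mkQ with hF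
  have hEF : E = F.comap (K : X →ₗ[ℝ] Y) := by
    ext x
    simp only [hF, Submodule.mem_comap, Submodule.mem_map]
    constructor
    · intro hx; exact ⟨x, hx, rfl⟩
    · rintro ⟨e, he, hxe⟩
      have hk : x - e ∈ LinearMap.ker (S : X →ₗ[ℝ] Y ⧸ Y₀) := by
        have : S e = S x := hxe
        simp [LinearMap.mem_ker, map_sub, this]
      have := hkerS hk
      simpa using E.add_mem this he
  refine ⟨F, ?_, ?_, hEF, ?_⟩
  · have : (F : Set Y) = Qc ⁻¹' (⇑S '' (E : Set X)) := by
      ext y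
      simp only [hF, Set.mem_preimage, SetLike.mem_coe, Submodule.mem_comap,
        Submodule.mem_map, Set.mem_image]
      exact ⟨fun ⟨e, he, h⟩ => ⟨e, he, h⟩, fun ⟨e, he, h⟩ => ⟨e, he, h⟩⟩
    rw [this]
    exact hSEclosed.preimage Qc.continuous
  · intro y hy
    refine Submodule.mem_comap.2 ⟨0, E.zero_mem, ?_⟩
    have : Y₀.mkQ y = 0 := (Submodule.Quotient.mk_eq_zero _).2 hy
    simp [S, Qc, this]
  · intro hXE hYF
    apply hXE
    let T : X →ₗ[ℝ] Y ⧸ F := F.mkQ.comp (K : X →ₗ[ℝ] Y)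
    have hTsurj : Surjective T := by
      intro z
      obtain ⟨y, rfl⟩ := F.mkQ_surjective z
      obtain ⟨x, hx⟩ := hSsurj (Y₀.mkQ y)
      refine ⟨x, ?_⟩
      have hmem : K x - y ∈ F := by
        refine Submodule.mem_comap.2 ⟨0, E.zero_mem, ?_⟩
        have h0 : Y₀.mkQ (K x) = Y₀.mkQ y := hx
        simp [map_sub, h0, S, Qc]
      have : F.mkQ (K x - y) = 0 := (Submodule.Quotient.mk_eq_zero _).2 hmem
      have : F.mkQ (K x) = F.mkQ y := by
        rwa [map_sub, sub_eq_zero] at this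
      simpa [T] using this
    have hkerT : LinearMap.ker T = E := by
      rw [hEF]
      ext x
      simp [T, LinearMap.mem_ker, Submodule.mem_comap, Submodule.Quotient.mk_eq_zero]
    let e1 : (X ⧸ LinearMap.ker T) ≃ₗ[ℝ] Y ⧸ F := T.quotKerEquivOfSurjective hTsurj
    let e2 : (X ⧸ E) ≃ₗ[ℝ] (X ⧸ LinearMap.ker T) := Submodule.quotEquivOfEq _ _ hkerT.symm
    haveI := hYF
    exact LinearEquiv.finiteDimensional (e2.trans e1).symm
end

section
/- Let X and Y be Banach spaces. If the set Φ₊(X,Y) of upper semi-Fredholm operators from X to Y is nonempty and Y is subprojective, then X is subprojective. -/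
open Function

theorem subprojective_of_upperSemiFredholm_nonempty
    {X Y : Type*} [NormedAddCommGroup X] [NormedSpace ℝ X] [CompleteSpace X]
    [NormedAddCommGroup Y] [NormedSpace ℝ Y] [CompleteSpace Y]
    (hne : ∃ T : X →L[ℝ] Y, UpperSemiFredholm T) (hY : Subprojective Y) :
    Subprojective X := by
  obtain ⟨T, hTker, hTrange⟩ := hne
  intro U hUc hUinf
  set N := LinearMap.ker (T : X →ₗ[ℝ] Y) with hN
  haveI : FiniteDimensional ℝ N := hTker
  -- projection onto the kernel
  obtain ⟨f, hf⟩ := Submodule.ClosedComplemented.of_finiteDimensional N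
  -- the complement M of the kernel
  set M := LinearMap.ker ((N.subtypeL.comp f : X →L[ℝ] X) : X →ₗ[ℝ] X) with hM
  have hMmem : ∀ x : X, x ∈ M ↔ f x = 0 := by
    intro x
    constructor
    · intro hx
      have : (↑(f x) : X) = 0 := hx
      exact Subtype.ext this
    · intro hx
      show (↑(f x) : X) = 0
      rw [hx]; rfl
  have hMc : IsClosed (M : Set X) := ContinuousLinearMap.isClosed_ker (N.subtypeL.comp f)
  haveI : CompleteSpace M := hMc.completeSpace_coe
  -- T is injective on M
  have hinjM : ∀ a b : X, a ∈ M → b ∈ M → T a = T b → a = b := by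
    intro a b ha hb hab
    have hdiff : a - b ∈ N := by
      simp only [hN, LinearMap.mem_ker, ContinuousLinearMap.coe_coe, map_sub, hab, sub_self]
    have := hf ⟨a - b, hdiff⟩
    have hfa : f a = 0 := (hMmem a).1 ha
    have hfb : f b = 0 := (hMmem b).1 hb
    have : (⟨a - b, hdiff⟩ : N) = 0 := by
      rw [← this]
      have : f (a - b) = 0 := by rw [map_sub, hfa, hfb, sub_zero]
      exact this
    have : a - b = 0 := congrArg Subtype.val this
    exact sub_eq_zero.mp this
  -- range of T restricted to M is the full range of T
  have hdecomp : ∀ x : X, x - ↑(f x) ∈ M := by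
    intro x
    rw [hMmem]
    have : f (↑(f x) : X) = f x := hf (f x)
    rw [map_sub, this, sub_self]
  have hTM : Submodule.map (T : X →ₗ[ℝ] Y) M = LinearMap.range (T : X →ₗ[ℝ] Y) := by
    apply le_antisymm
    · rintro y ⟨x, _, rfl⟩; exact ⟨x, rfl⟩
    · rintro y ⟨x, rfl⟩
      refine ⟨x - ↑(f x), hdecomp x, ?_⟩
      have hker : (↑(f x) : X) ∈ N := (f x).2
      have : T ↑(f x) = 0 := hker
      rw [map_sub, ContinuousLinearMap.coe_coe, this, sub_zero]
  set TM := LinearMap.range ((T.comp M.subtypeL : M →L[ℝ] Y) : M →ₗ[ℝ] Y) with hTMdef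
  have hTMeq : TM = LinearMap.range (T : X →ₗ[ℝ] Y) := by
    rw [← hTM]
    apply le_antisymm
    · rintro y ⟨m, rfl⟩; exact ⟨↑m, m.2, rfl⟩
    · rintro y ⟨x, hx, rfl⟩; exact ⟨⟨x, hx⟩, rfl⟩
  have hTMc : IsClosed (TM : Set Y) := by rw [hTMeq]; exact hTrange
  haveI : CompleteSpace TM := hTMc.completeSpace_coe
  -- the restriction of T to M as a continuous linear equivalence onto TM
  set Tm : M →L[ℝ] TM :=
    (T.comp M.subtypeL).codRestrict TM (fun m => LinearMap.mem_range_self _ m) with hTmdef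
  have hTmcoe : ∀ m : M, (↑(Tm m) : Y) = T ↑m := fun m => rfl
  have hTminj : LinearMap.ker (Tm : M →ₗ[ℝ] TM) = ⊥ := by
    refine LinearMap.ker_eq_bot'.mpr fun a ha => ?_
    have hab : T ↑a = T (0 : M) := by
      rw [← hTmcoe a, show Tm a = 0 from ha]; simp
    simpa using Subtype.ext (hinjM ↑a ↑(0 : M) a.2 (0 : M).2 hab)
  have hTmsurj : LinearMap.range (Tm : M →ₗ[ℝ] TM) = ⊤ := by
    rw [Submodule.eq_top_iff']
    rintro ⟨y, m, rfl⟩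
    exact ⟨m, rfl⟩
  set e := ContinuousLinearEquiv.ofBijective Tm hTminj hTmsurj with he
  have hee : ∀ m : M, e m = Tm m := fun m => rfl
  -- the subspace U ⊓ M is infinite dimensional
  have hUMinf : ¬ FiniteDimensional ℝ ↥(U ⊓ M) := by
    intro hfin
    apply hUinf
    set g : U →ₗ[ℝ] N := (f.comp U.subtypeL).toLinearMap with hg
    haveI : FiniteDimensional ℝ ↥(LinearMap.range g) :=
      FiniteDimensional.finiteDimensional_submodule _
    haveI : FiniteDimensional ℝ ↥(LinearMap.ker g) := by
      have hsub : ∀ x : LinearMap.ker g, (↑↑x : X) ∈ U ⊓ M := by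
        rintro ⟨⟨x, hxU⟩, hxk⟩
        exact Submodule.mem_inf.mpr ⟨hxU, (hMmem x).2 hxk⟩
      exact FiniteDimensional.of_injective
        (LinearMap.codRestrict (U ⊓ M) ((U.subtype).comp (LinearMap.ker g).subtype) hsub)
        (fun a b hab => by
          have h2 := congrArg Subtype.val hab
          exact Subtype.ext (Subtype.ext h2))
    have hrank : Module.rank ℝ ↥U < Cardinal.aleph0 := by
      rw [← LinearMap.rank_range_add_rank_ker g]
      exact Cardinal.add_lt_aleph0 (Module.rank_lt_aleph0 ℝ _) (Module.rank_lt_aleph0 ℝ _)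
    exact IsNoetherian.iff_fg.mp (IsNoetherian.iff_rank_lt_aleph0.mpr hrank)
  -- the image W = T(U ⊓ M)
  set W := Submodule.map (T : X →ₗ[ℝ] Y) (U ⊓ M) with hW
  have hWTM : W ≤ TM := by
    rw [hTMeq, ← hTM]
    exact Submodule.map_mono inf_le_right
  -- W is closed
  have hWc : IsClosed (W : Set Y) := by
    have hSc : IsClosed {m : M | (↑m : X) ∈ U} :=
      hUc.preimage continuous_subtype_val
    have himg : (W : Set Y) = Subtype.val '' (e '' {m : M | (↑m : X) ∈ U}) := by
      ext y
      constructor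
      · rintro ⟨x, ⟨hxU, hxM⟩, rfl⟩
        exact ⟨e ⟨x, hxM⟩, ⟨⟨x, hxM⟩, hxU, rfl⟩, (hTmcoe ⟨x, hxM⟩).symm⟩
      · rintro ⟨z, ⟨m, hm, rfl⟩, rfl⟩
        exact ⟨↑m, ⟨hm, m.2⟩, (hTmcoe m).symm⟩
    rw [himg]
    exact hTMc.isClosedEmbedding_subtypeVal.isClosedMap _
      (e.toHomeomorph.isClosedMap _ hSc)
  -- W is infinite dimensional
  have hWinf : ¬ FiniteDimensional ℝ ↥W := by
    intro hfin
    apply hUMinf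
    have hsub : ∀ x : ↥(U ⊓ M), T ↑x ∈ W := fun x => ⟨↑x, x.2, rfl⟩
    refine FiniteDimensional.of_injective
      (LinearMap.codRestrict W ((T.toLinearMap).comp (U ⊓ M).subtype) hsub) ?_
    intro a b hab
    have : T ↑a = T ↑b := congrArg Subtype.val hab
    exact Subtype.ext (hinjM ↑a ↑b a.2.2 b.2.2 this)
  -- apply subprojectivity of Y
  obtain ⟨V', hV'W, hV'c, hV'inf, P, hP⟩ := hY W hWc hWinf
  -- the pullback V
  set V := (U ⊓ M) ⊓ Submodule.comap (T : X →ₗ[ℝ] Y) V' with hV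
  have hmapV : Submodule.map (T : X →ₗ[ℝ] Y) V = V' := by
    apply le_antisymm
    · rintro y ⟨x, ⟨_, hx2⟩, rfl⟩
      exact hx2
    · intro y hy
      obtain ⟨x, hxUM, rfl⟩ := hV'W hy
      exact ⟨x, ⟨hxUM, hy⟩, rfl⟩
  refine ⟨V, fun x hx => hx.1.1, ?_, ?_, ?_⟩
  · have : (V : Set X) = ((U ⊓ M : Submodule ℝ X) : Set X) ∩ T ⁻¹' (V' : Set Y) := rfl
    rw [this]
    exact ((hUc.inter hMc).inter (hV'c.preimage T.continuous))
  · intro hfin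
    apply hV'inf
    rw [← hmapV]
    exact Module.Finite.map V T.toLinearMap
  · -- V is complemented
    set j : V' →L[ℝ] TM :=
      ContinuousLinearMap.codRestrict V'.subtypeL TM (fun v => hWTM (hV'W v.2)) with hj
    set R : X →L[ℝ] X :=
      M.subtypeL.comp (((e.symm : TM →L[ℝ] M).comp j).comp (P.comp T)) with hR
    have hRapp : ∀ x : X, R x = ↑(e.symm (j (P (T x)))) := fun x => rfl
    have hTfix : ∀ m : TM, T (↑(e.symm m) : X) = ↑m := by
      intro m
      calc T (↑(e.symm m) : X) = ↑(Tm (e.symm m)) := (hTmcoe _).symm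
        _ = ↑(e (e.symm m)) := by rw [hee]
        _ = ↑m := by rw [e.apply_symm_apply]
    have hmemV : ∀ x : X, R x ∈ V := by
      intro x
      set m := e.symm (j (P (T x))) with hm
      have hTRm : T ↑m = ↑(P (T x)) := hTfix (j (P (T x)))
      refine ⟨⟨?_, m.2⟩, ?_⟩
      · -- R x ∈ U
        obtain ⟨u, ⟨huU, huM⟩, hu⟩ := hV'W (P (T x)).2
        have : (↑m : X) = u := hinjM ↑m u m.2 huM (hTRm.trans hu.symm)
        rw [hRapp, this]; exact huU
      · show T (R x) ∈ V'
        rw [hRapp, hTRm]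
        exact (P (T x)).2
    refine ⟨R.codRestrict V hmemV, ?_⟩
    intro v
    apply Subtype.ext
    show R ↑v = ↑v
    have hTv : T ↑v ∈ V' := v.2.2
    have hPv : P (T ↑v) = ⟨T ↑v, hTv⟩ := hP ⟨T ↑v, hTv⟩
    have hjv : j (P (T ↑v)) = Tm ⟨↑v, v.2.1.2⟩ := by
      apply Subtype.ext
      rw [hPv]
      exact (hTmcoe ⟨↑v, v.2.1.2⟩).symm
    rw [hRapp, hjv]
    have : e.symm (Tm ⟨↑v, v.2.1.2⟩) = ⟨↑v, v.2.1.2⟩ := by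
      rw [← hee]; exact e.symm_apply_apply _
    rw [this]
end

section
/- Let X and Y be Banach spaces. If the set Φ₋(X,Y) of lower semi-Fredholm operators from X to Y is nonempty and X is superprojective, then Y is superprojective. -/
open Function

section helpers
variable {E F : Type*} [NormedAddCommGroup E] [NormedSpace ℝ E]
    [NormedAddCommGroup F] [NormedSpace ℝ F]

noncomputable def cliftQ (N : Submodule ℝ E) (f : E →L[ℝ] F)
    (h : N ≤ LinearMap.ker (f : E →ₗ[ℝ] F)) : (E ⧸ N) →L[ℝ] F :=
  { N.liftQ (f : E →ₗ[ℝ] F) h with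
    cont := by
      rw [N.isOpenQuotientMap_mkQ.isQuotientMap.continuous_iff]
      exact f.continuous }

@[simp] lemma cliftQ_apply (N : Submodule ℝ E) (f : E →L[ℝ] F)
    (h : N ≤ LinearMap.ker (f : E →ₗ[ℝ] F)) (x : E) : cliftQ N f h (Submodule.Quotient.mk x) = f x := rfl

lemma cliftQ_coe (N : Submodule ℝ E) (f : E →L[ℝ] F) (h : N ≤ LinearMap.ker (f : E →ₗ[ℝ] F)) :
    (cliftQ N f h : (E ⧸ N) →ₗ[ℝ] F) = N.liftQ (f : E →ₗ[ℝ] F) h := rfl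

noncomputable def mkL (N : Submodule ℝ E) : E →L[ℝ] (E ⧸ N) :=
  { N.mkQ with cont := continuous_quot_mk }

@[simp] lemma mkL_apply (N : Submodule ℝ E) (x : E) : mkL N x = Submodule.Quotient.mk x := rfl

lemma isClosed_sup_of_finiteDimensional {p q : Submodule ℝ E}
    (hp : IsClosed (p : Set E)) [FiniteDimensional ℝ q] :
    IsClosed ((p ⊔ q : Submodule ℝ E) : Set E) := by
  haveI : IsClosed (p : Set E) := hp
  have h1 : p ⊔ q = (q.map p.mkQ).comap p.mkQ := (Submodule.comap_map_mkQ p q).symm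
  have h3 : IsClosed ((Submodule.map p.mkQ q : Submodule ℝ (E ⧸ p)) : Set (E ⧸ p)) :=
    Submodule.closed_of_finiteDimensional _
  have h2 : ((p ⊔ q : Submodule ℝ E) : Set E) =
      (mkL p) ⁻¹' ((Submodule.map p.mkQ q : Submodule ℝ (E ⧸ p)) : Set (E ⧸ p)) := by
    rw [h1]; rfl
  rw [h2]
  exact h3.preimage (mkL p).continuous

end helpers

open LinearMap in
set_option maxHeartbeats 2000000 in
theorem superprojective_of_lowerSemiFredholm_nonempty
    {X Y : Type*} [NormedAddCommGroup X] [NormedSpace ℝ X] [CompleteSpace X]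
    [NormedAddCommGroup Y] [NormedSpace ℝ Y] [CompleteSpace Y]
    (hne : ∃ T : X →L[ℝ] Y, LowerSemiFredholm T) (hX : Superprojective X) :
    Superprojective Y := by
  obtain ⟨T, hTc, hTf⟩ := hne
  intro Z hZc hZq
  set R : Submodule ℝ Y := LinearMap.range (T : X →ₗ[ℝ] Y) with hRdef
  set N : Submodule ℝ X := LinearMap.ker (T : X →ₗ[ℝ] Y) with hNdef
  haveI hTfI : FiniteDimensional ℝ (Y ⧸ R) := hTf
  haveI hRcomplete : CompleteSpace R := hTc.completeSpace_coe
  haveI hNc : IsClosed (N : Set X) := by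
    have : (N : Set X) = T ⁻¹' {0} := by
      ext x; simp [hNdef, LinearMap.mem_ker]
    rw [this]; exact isClosed_singleton.preimage T.continuous
  set Z₁ : Submodule ℝ X := Z.comap (T : X →ₗ[ℝ] Y) with hZ₁def
  have hZ₁c : IsClosed (Z₁ : Set X) := hZc.preimage T.continuous
  have hNZ₁ : N ≤ Z₁ := by
    intro x hx
    have hx' : T x = 0 := hx
    simp only [hZ₁def, Submodule.mem_comap, ContinuousLinearMap.coe_coe, hx']
    exact Z.zero_mem
  -- Step 2 : X ⧸ Z₁ is infinite dimensional
  have hZ₁q : ¬ FiniteDimensional ℝ (X ⧸ Z₁) := by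
    intro hfin
    apply hZq
    obtain ⟨F₀, hF₀⟩ := Submodule.exists_isCompl R
    haveI : FiniteDimensional ℝ F₀ := (R.quotientEquivOfIsCompl F₀ hF₀).finiteDimensional
    have hker : Z₁ ≤ LinearMap.ker (Z.mkQ ∘ₗ (T : X →ₗ[ℝ] Y)) := by
      intro x hx
      simp only [LinearMap.mem_ker, LinearMap.comp_apply, Submodule.mkQ_apply,
        Submodule.Quotient.mk_eq_zero]
      exact hx
    let ψ : (X ⧸ Z₁) →ₗ[ℝ] (Y ⧸ Z) := Z₁.liftQ (Z.mkQ ∘ₗ (T : X →ₗ[ℝ] Y)) hker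
    let φ : ((X ⧸ Z₁) × F₀) →ₗ[ℝ] (Y ⧸ Z) := ψ.coprod (Z.mkQ ∘ₗ F₀.subtype)
    refine FiniteDimensional.of_surjective φ ?_
    intro yq
    obtain ⟨y, rfl⟩ := Submodule.mkQ_surjective Z yq
    have : y ∈ R ⊔ F₀ := by rw [hF₀.sup_eq_top]; trivial
    obtain ⟨r, hr, f, hf, rfl⟩ := Submodule.mem_sup.mp this
    obtain ⟨x, rfl⟩ := hr
    refine ⟨(Submodule.Quotient.mk x, ⟨f, hf⟩), ?_⟩
    simp [φ, ψ, Submodule.liftQ_apply]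
  -- Step 3 : apply superprojectivity of X
  obtain ⟨W₁, hZ₁W₁, hW₁c, hW₁q, hW₁comp⟩ := hX Z₁ hZ₁c hZ₁q
  obtain ⟨P, hP⟩ := id hW₁comp
  have hNW₁ : N ≤ W₁ := le_trans hNZ₁ hZ₁W₁
  set Pe : X →L[ℝ] X := W₁.subtypeL.comp P with hPedef
  have hPe_mem : ∀ x, Pe x ∈ W₁ := fun x => (P x).2
  have hPe_fix : ∀ x ∈ W₁, Pe x = x := by
    intro x hx
    have := hP ⟨x, hx⟩
    simpa [hPedef] using congrArg (Subtype.val) this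
  -- Step 4 : quotient X ⧸ N and the equivalence onto R
  set S₀ : X →L[ℝ] R := T.codRestrict R (fun x => LinearMap.mem_range_self _ x) with hS₀def
  have hkerS₀ : LinearMap.ker (S₀ : X →ₗ[ℝ] R) = N := by
    rw [hS₀def]; exact T.ker_codRestrict R _
  set ebar : (X ⧸ N) →L[ℝ] R := cliftQ N S₀ (le_of_eq hkerS₀.symm) with hebardef
  have hker_ebar : LinearMap.ker (ebar : (X ⧸ N) →ₗ[ℝ] R) = ⊥ := by
    show LinearMap.ker (N.liftQ (S₀ : X →ₗ[ℝ] R) (le_of_eq hkerS₀.symm)) = ⊥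
    exact Submodule.ker_liftQ_eq_bot' N _ hkerS₀.symm
  have hrange_ebar : LinearMap.range (ebar : (X ⧸ N) →ₗ[ℝ] R) = ⊤ := by
    show LinearMap.range (N.liftQ (S₀ : X →ₗ[ℝ] R) (le_of_eq hkerS₀.symm)) = ⊤
    rw [Submodule.range_liftQ]
    rw [LinearMap.range_eq_top]
    rintro ⟨y, x, rfl⟩
    exact ⟨x, rfl⟩
  set e : (X ⧸ N) ≃L[ℝ] R := ContinuousLinearEquiv.ofBijective ebar hker_ebar hrange_ebar
    with hedef
  have he_mk : ∀ x : X, (e (Submodule.Quotient.mk x) : Y) = T x := fun x => rfl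
  -- Step 5 : the induced projection G on X ⧸ N
  have hGker_le : N ≤ LinearMap.ker (((mkL N).comp (ContinuousLinearMap.id ℝ X - Pe) : X →L[ℝ] (X ⧸ N)) : X →ₗ[ℝ] (X ⧸ N)) := by
    intro n hn
    have h1 : Pe n = n := hPe_fix n (hNW₁ hn)
    simp only [LinearMap.mem_ker, ContinuousLinearMap.coe_comp', Function.comp_apply,
      ContinuousLinearMap.coe_coe, ContinuousLinearMap.coe_sub', Pi.sub_apply, ContinuousLinearMap.coe_id', id_eq, h1,
      sub_self, mkL_apply, map_zero]
  set G : (X ⧸ N) →L[ℝ] (X ⧸ N) := cliftQ N ((mkL N).comp (ContinuousLinearMap.id ℝ X - Pe))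
    hGker_le with hGdef
  have hG_mk : ∀ x : X, G (Submodule.Quotient.mk x) = Submodule.Quotient.mk (x - Pe x) :=
    fun x => rfl
  set Wq : Submodule ℝ (X ⧸ N) := W₁.map N.mkQ with hWqdef
  set Vq : Submodule ℝ (X ⧸ N) := LinearMap.range (G : (X ⧸ N) →ₗ[ℝ] (X ⧸ N)) with hVqdef
  have hGkerW : LinearMap.ker (G : (X ⧸ N) →ₗ[ℝ] (X ⧸ N)) = Wq := by
    ext xq
    obtain ⟨x, rfl⟩ := Submodule.mkQ_surjective N xq
    constructor
    · intro hx
      rw [LinearMap.mem_ker, ContinuousLinearMap.coe_coe] at hx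
      rw [Submodule.mkQ_apply] at hx ⊢
      rw [hG_mk x, Submodule.Quotient.mk_eq_zero] at hx
      have : x - Pe x ∈ W₁ := hNW₁ hx
      have hx' : x ∈ W₁ := by
        have := W₁.add_mem this (hPe_mem x)
        simpa using this
      exact Submodule.mem_map_of_mem hx'
    · intro hx
      rw [Submodule.mkQ_apply] at hx
      obtain ⟨w, hw, hwx⟩ := hx
      rw [LinearMap.mem_ker, ContinuousLinearMap.coe_coe]
      have : (Submodule.Quotient.mk x : X ⧸ N) = Submodule.Quotient.mk w := by
        rw [← hwx]; rfl
      rw [Submodule.mkQ_apply, this, hG_mk w, hPe_fix w hw, sub_self]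
      exact Submodule.Quotient.mk_eq_zero _ |>.mpr (Submodule.zero_mem N)
  have hG_fix : ∀ yq ∈ Vq, G yq = yq := by
    rintro yq ⟨xq, rfl⟩
    obtain ⟨x, rfl⟩ := Submodule.mkQ_surjective N xq
    rw [ContinuousLinearMap.coe_coe, Submodule.mkQ_apply, hG_mk x, hG_mk (x - Pe x)]
    congr 1
    have h1 : Pe (x - Pe x) = 0 := by
      rw [map_sub, hPe_fix (Pe x) (hPe_mem x), sub_self]
    rw [h1, sub_zero]
  have hVq_closed : IsClosed (Vq : Set (X ⧸ N)) := by
    have : Vq = LinearMap.ker ((ContinuousLinearMap.id ℝ (X ⧸ N) - G : (X ⧸ N) →L[ℝ] (X ⧸ N)) : (X ⧸ N) →ₗ[ℝ] (X ⧸ N)) := by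
      ext yq
      simp only [LinearMap.mem_ker, ContinuousLinearMap.coe_coe, ContinuousLinearMap.coe_sub', Pi.sub_apply,
        ContinuousLinearMap.coe_id', id_eq, sub_eq_zero]
      constructor
      · intro h; exact (hG_fix yq h).symm
      · intro h; exact ⟨yq, h.symm⟩
    rw [this]
    have h2 : (LinearMap.ker ((ContinuousLinearMap.id ℝ (X ⧸ N) - G : (X ⧸ N) →L[ℝ] (X ⧸ N)) : (X ⧸ N) →ₗ[ℝ] (X ⧸ N)) : Set (X ⧸ N)) =
        (ContinuousLinearMap.id ℝ (X ⧸ N) - G) ⁻¹' {0} := by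
      ext yq; simp [LinearMap.mem_ker]
    rw [h2]
    exact isClosed_singleton.preimage (ContinuousLinearMap.id ℝ (X ⧸ N) - G).continuous
  have hWq_closed : IsClosed (Wq : Set (X ⧸ N)) := by
    rw [← hGkerW]
    have h2 : (LinearMap.ker (G : (X ⧸ N) →ₗ[ℝ] (X ⧸ N)) : Set (X ⧸ N)) = G ⁻¹' {0} := by
      ext yq; simp [LinearMap.mem_ker]
    rw [h2]
    exact isClosed_singleton.preimage G.continuous
  have hWVq : IsCompl Wq Vq := by
    constructor
    · rw [disjoint_iff]
      ext yq
      simp only [Submodule.mem_inf, Submodule.mem_bot]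
      constructor
      · rintro ⟨h1, h2⟩
        have h3 : G yq = 0 := by rw [← hGkerW] at h1; exact h1
        have h4 := hG_fix yq h2
        rw [h3] at h4; exact h4.symm
      · rintro rfl; exact ⟨Wq.zero_mem, Vq.zero_mem⟩
    · rw [codisjoint_iff]
      rw [eq_top_iff]
      intro yq _
      rw [Submodule.mem_sup]
      refine ⟨yq - G yq, ?_, G yq, ⟨yq, rfl⟩, by abel⟩
      rw [← hGkerW, LinearMap.mem_ker, ContinuousLinearMap.coe_coe, map_sub]
      obtain ⟨x, rfl⟩ := Submodule.mkQ_surjective N yq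
      rw [Submodule.mkQ_apply]
      rw [hG_fix (G (Submodule.Quotient.mk x)) ⟨Submodule.Quotient.mk x, rfl⟩, sub_self]
  -- Step 6 : transport to R and then to Y
  set M : Submodule ℝ Y := W₁.map (T : X →ₗ[ℝ] Y) with hMdef
  set MR : Submodule ℝ R := Wq.map (e : (X ⧸ N) →ₗ[ℝ] R) with hMRdef
  set VR : Submodule ℝ R := Vq.map (e : (X ⧸ N) →ₗ[ℝ] R) with hVRdef
  have he_inj : Function.Injective (e : (X ⧸ N) →ₗ[ℝ] R) := e.injective
  have hMRVR : IsCompl MR VR := by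
    constructor
    · rw [disjoint_iff, hMRdef, hVRdef, ← Submodule.map_inf _ he_inj, disjoint_iff.mp hWVq.1,
        Submodule.map_bot]
    · rw [codisjoint_iff, hMRdef, hVRdef, ← Submodule.map_sup, codisjoint_iff.mp hWVq.2,
        Submodule.map_top]
      exact LinearMap.range_eq_top.mpr e.surjective
  have hMR_closed : IsClosed (MR : Set R) := by
    have : (MR : Set R) = e.toHomeomorph '' (Wq : Set (X ⧸ N)) := rfl
    rw [this]
    exact e.toHomeomorph.isClosedMap _ hWq_closed
  have hVR_closed : IsClosed (VR : Set R) := by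
    have : (VR : Set R) = e.toHomeomorph '' (Vq : Set (X ⧸ N)) := rfl
    rw [this]
    exact e.toHomeomorph.isClosedMap _ hVq_closed
  set V : Submodule ℝ Y := VR.map R.subtype with hVdef
  have hcomp : R.subtype ∘ₗ ((e : (X ⧸ N) →ₗ[ℝ] R) ∘ₗ N.mkQ) = (T : X →ₗ[ℝ] Y) :=
    LinearMap.ext fun x => rfl
  have hMY : MR.map R.subtype = M := by
    ext y
    constructor
    · rintro ⟨r, hr, rfl⟩
      rw [hMRdef] at hr
      obtain ⟨q, hq, rfl⟩ := hr
      rw [hWqdef] at hq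
      obtain ⟨w, hw, rfl⟩ := hq
      rw [hMdef]
      exact ⟨w, hw, (he_mk w).symm⟩
    · rintro ⟨w, hw, rfl⟩
      refine ⟨e (Submodule.Quotient.mk w), ?_, he_mk w⟩
      rw [hMRdef]
      exact ⟨Submodule.Quotient.mk w, Submodule.mem_map_of_mem hw, rfl⟩
  have hsubtype_inj : Function.Injective R.subtype := Subtype.val_injective
  have hMV_sup : M ⊔ V = R := by
    rw [← hMY, hVdef, ← Submodule.map_sup, codisjoint_iff.mp hMRVR.2, Submodule.map_top,
      Submodule.range_subtype]
  have hMV_inf : M ⊓ V = ⊥ := by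
    rw [← hMY, hVdef, ← Submodule.map_inf _ hsubtype_inj, disjoint_iff.mp hMRVR.1,
      Submodule.map_bot]
  have hM_le_R : M ≤ R := by rintro y ⟨x, hx, rfl⟩; exact ⟨x, rfl⟩
  have hV_le_R : V ≤ R := by rintro y ⟨v, hv, rfl⟩; exact v.2
  have hM_closed : IsClosed (M : Set Y) := by
    rw [← hMY]
    have : ((MR.map R.subtype : Submodule ℝ Y) : Set Y) = Subtype.val '' (MR : Set R) := rfl
    rw [this]
    exact hTc.isClosedEmbedding_subtypeVal.isClosedMap _ hMR_closed
  have hV_closed : IsClosed (V : Set Y) := by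
    have : ((VR.map R.subtype : Submodule ℝ Y) : Set Y) = Subtype.val '' (VR : Set R) := rfl
    rw [hVdef, this]
    exact hTc.isClosedEmbedding_subtypeVal.isClosedMap _ hVR_closed
  -- Step 7 : complement F₁ of R, and C := V ⊔ F₁ complements M in Y
  have hRcc : R.ClosedComplemented :=
    Submodule.ClosedComplemented.of_quotient_finiteDimensional hTc
  obtain ⟨F₁, hF₁_closed, hRF₁⟩ := hRcc.exists_isClosed_isCompl
  haveI hF₁_fin : FiniteDimensional ℝ F₁ :=
    (R.quotientEquivOfIsCompl F₁ hRF₁).finiteDimensional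
  set C : Submodule ℝ Y := V ⊔ F₁ with hCdef
  have hC_closed : IsClosed (C : Set Y) := isClosed_sup_of_finiteDimensional hV_closed
  have hMC : IsCompl M C := by
    constructor
    · rw [disjoint_iff, eq_bot_iff]
      intro y hy
      obtain ⟨hyM, hyC⟩ := Submodule.mem_inf.mp hy
      rw [hCdef] at hyC
      obtain ⟨v, hv, f, hf, hy'⟩ := Submodule.mem_sup.mp hyC
      have hfR : f ∈ R ⊓ F₁ := by
        refine ⟨?_, hf⟩
        have h1 : y - v ∈ R := R.sub_mem (hM_le_R hyM) (hV_le_R hv)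
        have h2 : f = y - v := by rw [← hy']; abel
        rw [h2]; exact h1
      rw [disjoint_iff.mp hRF₁.1, Submodule.mem_bot] at hfR
      rw [hfR, add_zero] at hy'
      have : y ∈ M ⊓ V := ⟨hyM, hy' ▸ hv⟩
      rw [hMV_inf] at this
      exact this
    · rw [codisjoint_iff, hCdef, ← sup_assoc, hMV_sup]
      exact codisjoint_iff.mp hRF₁.2
  set pe : Y →L[ℝ] Y := M.subtypeL.comp (M.linearProjOfClosedCompl C hMC hM_closed hC_closed)
    with hpedef
  have hpe_mem : ∀ y, pe y ∈ M := fun y => (M.linearProjOfClosedCompl C hMC hM_closed hC_closed y).2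
  have hpe_left : ∀ y ∈ M, pe y = y := by
    intro y hy
    have := Submodule.linearProjOfIsCompl_apply_left hMC ⟨y, hy⟩
    rw [hpedef]
    simpa [Submodule.coe_continuous_linearProjOfClosedCompl'] using congrArg Subtype.val this
  have hpe_right : ∀ y ∈ C, pe y = 0 := by
    intro y hy
    have := Submodule.linearProjOfIsCompl_apply_right hMC ⟨y, hy⟩
    rw [hpedef]
    simpa [Submodule.coe_continuous_linearProjOfClosedCompl'] using congrArg Subtype.val this
  have hpe_sub : ∀ y, y - pe y ∈ C := by
    intro y
    have : y ∈ M ⊔ C := by rw [codisjoint_iff.mp hMC.2]; trivial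
    obtain ⟨m, hm, c, hc, rfl⟩ := Submodule.mem_sup.mp this
    have : pe (m + c) = m := by rw [map_add, hpe_left m hm, hpe_right c hc, add_zero]
    rw [this]
    simpa using hc
  -- Step 8 : the subspace W := M ⊔ Z
  set W : Submodule ℝ Y := M ⊔ Z with hWdef
  have hM_le_W : M ≤ W := le_sup_left
  have hZW : Z ≤ W := le_sup_right
  have hZRM : ∀ y ∈ Z, y ∈ R → y ∈ M := by
    intro y hyZ hyR
    obtain ⟨x, rfl⟩ := hyR
    have hxZ₁ : x ∈ Z₁ := hyZ
    rw [hMdef]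
    exact ⟨x, hZ₁W₁ hxZ₁, rfl⟩
  set D : Submodule ℝ Y := W ⊓ C with hDdef
  have hD_le_C : D ≤ C := inf_le_right
  have hW_iff : ∀ y, y ∈ W ↔ y - pe y ∈ D := by
    intro y
    constructor
    · intro hy
      exact ⟨W.sub_mem hy (hM_le_W (hpe_mem y)), hpe_sub y⟩
    · intro hy
      have h1 : y = pe y + (y - pe y) := by abel
      rw [h1]
      exact W.add_mem (hM_le_W (hpe_mem y)) hy.1
  -- Step 9 : D is finite dimensional
  set g : Z →ₗ[ℝ] (Y ⧸ M) := M.mkQ ∘ₗ Z.subtype with hgdef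
  set KR : Submodule ℝ Z := R.comap Z.subtype with hKRdef
  haveI hfin1 : FiniteDimensional ℝ (Z ⧸ KR) := by
    have hker' : LinearMap.ker (R.mkQ ∘ₗ Z.subtype) = KR := by
      ext z
      simp [LinearMap.mem_ker, hKRdef, Submodule.Quotient.mk_eq_zero]
    exact FiniteDimensional.of_injective (KR.liftQ (R.mkQ ∘ₗ Z.subtype) (le_of_eq hker'.symm))
      (LinearMap.ker_eq_bot.mp (Submodule.ker_liftQ_eq_bot' KR _ hker'.symm))
  have hKR_le : KR ≤ LinearMap.ker g := by
    intro z hz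
    have h1 : (z : Y) ∈ M := hZRM z z.2 hz
    simp only [hgdef, LinearMap.mem_ker, LinearMap.comp_apply, Submodule.subtype_apply,
      Submodule.mkQ_apply, Submodule.Quotient.mk_eq_zero]
    exact h1
  haveI hfin2 : FiniteDimensional ℝ (Z ⧸ LinearMap.ker g) := by
    refine FiniteDimensional.of_surjective (Submodule.mapQ KR (LinearMap.ker g) LinearMap.id hKR_le) ?_
    intro zq
    obtain ⟨z, rfl⟩ := Submodule.mkQ_surjective _ zq
    exact ⟨Submodule.Quotient.mk z, by simp [Submodule.mapQ_apply]⟩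
  haveI hfin3 : FiniteDimensional ℝ (LinearMap.range g) :=
    (g.quotKerEquivRange).finiteDimensional
  have hrange_g : LinearMap.range g = Z.map M.mkQ := by
    rw [hgdef, LinearMap.range_comp, Submodule.range_subtype]
  have hWmap : W.map M.mkQ = Z.map M.mkQ := by
    rw [hWdef, Submodule.map_sup]
    have h1 : M.map M.mkQ = ⊥ := by
      rw [eq_bot_iff]
      rintro yq ⟨m, hm, rfl⟩
      simp only [Submodule.mkQ_apply, Submodule.mem_bot, Submodule.Quotient.mk_eq_zero]
      exact hm
    rw [h1, bot_sup_eq]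
  haveI hD_fin : FiniteDimensional ℝ D := by
    have hmem : ∀ d : D, (M.mkQ ∘ₗ D.subtype) d ∈ LinearMap.range g := by
      intro d
      rw [hrange_g, ← hWmap]
      exact Submodule.mem_map_of_mem d.2.1
    set ι : D →ₗ[ℝ] LinearMap.range g :=
      LinearMap.codRestrict _ (M.mkQ ∘ₗ D.subtype) hmem with hιdef
    refine FiniteDimensional.of_injective ι ?_
    rw [← LinearMap.ker_eq_bot, eq_bot_iff]
    intro d hd
    rw [LinearMap.mem_ker] at hd
    have h1 : (M.mkQ ∘ₗ D.subtype) d = 0 := by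
      have := congrArg Subtype.val hd
      simpa [hιdef] using this
    have h2 : (d : Y) ∈ M := by
      simpa [Submodule.Quotient.mk_eq_zero] using h1
    have h3 : (d : Y) ∈ M ⊓ C := ⟨h2, hD_le_C d.2⟩
    rw [disjoint_iff.mp hMC.1, Submodule.mem_bot] at h3
    simpa [Submodule.mem_bot] using Subtype.ext h3
  -- Step 10 : W is closed
  have hW_closed : IsClosed (W : Set Y) := by
    have h1 : (W : Set Y) = (fun y => y - pe y) ⁻¹' (D : Set Y) := Set.ext hW_iff
    rw [h1]
    exact (Submodule.closed_of_finiteDimensional D).preimage (continuous_id.sub pe.continuous)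
  -- Step 11 : Y ⧸ W is infinite dimensional
  have hcomapW : Submodule.comap (T : X →ₗ[ℝ] Y) W = W₁ := by
    ext x
    constructor
    · intro hx
      have hx' : T x ∈ M ⊔ Z := hx
      obtain ⟨m, hm, z, hz, hmz⟩ := Submodule.mem_sup.mp hx'
      rw [hMdef] at hm
      obtain ⟨w, hw, rfl⟩ := hm
      simp only [ContinuousLinearMap.coe_coe] at hmz
      have h1 : T (x - w) ∈ Z := by
        have h2 : z = T x - T w := by rw [← hmz]; abel
        rw [map_sub, ← h2]
        exact hz
      have h3 : x - w ∈ Z₁ := h1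
      have h4 := W₁.add_mem (hZ₁W₁ h3) hw
      simpa using h4
    · intro hx
      show T x ∈ W
      exact hM_le_W ⟨x, hx, rfl⟩
  have hWq2 : ¬ FiniteDimensional ℝ (Y ⧸ W) := by
    intro hfin
    apply hW₁q
    have hker' : LinearMap.ker (W.mkQ ∘ₗ (T : X →ₗ[ℝ] Y)) = W₁ := by
      rw [← hcomapW]
      ext x
      simp [LinearMap.mem_ker, Submodule.Quotient.mk_eq_zero]
    exact FiniteDimensional.of_injective (W₁.liftQ (W.mkQ ∘ₗ (T : X →ₗ[ℝ] Y)) (le_of_eq hker'.symm))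
      (LinearMap.ker_eq_bot.mp (Submodule.ker_liftQ_eq_bot' W₁ _ hker'.symm))
  -- Step 12 : W is complemented
  haveI : CompleteSpace C := hC_closed.completeSpace_coe
  set D' : Submodule ℝ C := D.comap C.subtype with hD'def
  haveI hD'_fin : FiniteDimensional ℝ D' :=
    (Submodule.comapSubtypeEquivOfLe hD_le_C).symm.finiteDimensional
  have hD'cc : D'.ClosedComplemented := Submodule.ClosedComplemented.of_finiteDimensional D'
  obtain ⟨C₂', hC₂'_closed, hD'C₂'⟩ := hD'cc.exists_isClosed_isCompl
  set C₂ : Submodule ℝ Y := C₂'.map C.subtype with hC₂def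
  have hC₂_closed : IsClosed (C₂ : Set Y) := by
    have h0 : ((C₂'.map C.subtype : Submodule ℝ Y) : Set Y) = Subtype.val '' (C₂' : Set C) := rfl
    rw [hC₂def, h0]
    exact hC_closed.isClosedEmbedding_subtypeVal.isClosedMap _ hC₂'_closed
  have hD'map : D'.map C.subtype = D := by
    rw [hD'def, Submodule.map_comap_subtype]
    exact inf_eq_right.mpr hD_le_C
  have hDC₂_sup : D ⊔ C₂ = C := by
    rw [hC₂def, ← hD'map, ← Submodule.map_sup, codisjoint_iff.mp hD'C₂'.2, Submodule.map_top,
      Submodule.range_subtype]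
  have hDC₂_inf : D ⊓ C₂ = ⊥ := by
    rw [hC₂def, ← hD'map, ← Submodule.map_inf _ Subtype.val_injective,
      disjoint_iff.mp hD'C₂'.1, Submodule.map_bot]
  have hWC₂ : IsCompl W C₂ := by
    constructor
    · rw [disjoint_iff, eq_bot_iff]
      intro y hy
      obtain ⟨hyW, hyC₂⟩ := Submodule.mem_inf.mp hy
      have h1 : y ∈ C := by
        rw [← hDC₂_sup]
        exact (le_sup_right : C₂ ≤ D ⊔ C₂) hyC₂
      have h2 : y ∈ D := ⟨hyW, h1⟩
      have h3 : y ∈ D ⊓ C₂ := ⟨h2, hyC₂⟩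
      rw [hDC₂_inf] at h3
      exact h3
    · rw [codisjoint_iff, eq_top_iff, ← codisjoint_iff.mp hMC.2]
      refine sup_le (hM_le_W.trans le_sup_left) ?_
      rw [← hDC₂_sup]
      have hD_le_W : D ≤ W := inf_le_left
      exact sup_le (hD_le_W.trans le_sup_left) le_sup_right
  exact ⟨W, hZW, hW_closed, hWq2,
    Submodule.ClosedComplemented.of_isCompl_isClosed hWC₂ hW_closed hC₂_closed⟩
end

section
/- Every quotient of a superprojective Banach space by a closed subspace is itself superprojective. -/
open Function

theorem superprojective_quotient
    {X : Type*} [NormedAddCommGroup X] [NormedSpace ℝ X] [CompleteSpace X]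
    (hX : Superprojective X) (N : Submodule ℝ X) (hN : IsClosed (N : Set X)) :
    Superprojective (X ⧸ N) := by
  intro Z hZclosed hZcodim
  -- the continuous quotient map
  set mkQc : X →L[ℝ] X ⧸ N := ⟨N.mkQ, N.isOpenQuotientMap_mkQ.continuous⟩ with hmkQc
  have mkQc_apply : ∀ x : X, mkQc x = N.mkQ x := fun _ => rfl
  -- pull back Z
  set Z' : Submodule ℝ X := Z.comap N.mkQ with hZ'
  have hNZ' : N ≤ Z' := fun n hn => by
    simp only [hZ', Submodule.mem_comap, Submodule.mkQ_apply]
    rw [Submodule.Quotient.mk_eq_zero N |>.mpr hn]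
    exact Z.zero_mem
  have hZ'map : Z'.map N.mkQ = Z := by
    rw [hZ', Submodule.map_comap_eq, Submodule.range_mkQ, top_inf_eq]
  have hZ'closed : IsClosed (Z' : Set X) := hZclosed.preimage mkQc.continuous
  have hZ'codim : ¬ FiniteDimensional ℝ (X ⧸ Z') := by
    intro h
    have e := (Submodule.quotientQuotientEquivQuotient N Z' hNZ').symm
    rw [hZ'map] at e
    exact hZcodim e.finiteDimensional
  obtain ⟨W, hZ'W, hWclosed, hWcodim, f, hf⟩ := hX Z' hZ'closed hZ'codim
  have hNW : N ≤ W := le_trans hNZ' hZ'W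
  -- the projection P onto W and complementary Q
  set P : X →L[ℝ] X := W.subtypeL.comp f with hP
  have hPW : ∀ x, P x ∈ W := fun x => (f x).2
  have hPid : ∀ w ∈ W, P w = w := fun w hw => by
    have := hf ⟨w, hw⟩
    simp [hP, this]
  set Q : X →L[ℝ] X := ContinuousLinearMap.id ℝ X - P with hQ
  have hQN : ∀ n ∈ N, Q n = 0 := fun n hn => by
    simp [hQ, hPid n (hNW hn)]
  -- lift Q to the quotient
  set g : X →L[ℝ] X ⧸ N := mkQc.comp Q with hg
  have hgN : N ≤ LinearMap.ker (g : X →ₗ[ℝ] X ⧸ N) := fun n hn => by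
    simp only [LinearMap.mem_ker]
    show g n = 0
    rw [hg]
    simp only [ContinuousLinearMap.comp_apply, hQN n hn, map_zero]
  set Qbarₗ : (X ⧸ N) →ₗ[ℝ] X ⧸ N := N.liftQ (g : X →ₗ[ℝ] X ⧸ N) hgN with hQbarₗ
  have hQbarₗ_mk : ∀ x : X, Qbarₗ (N.mkQ x) = N.mkQ (Q x) := fun x => by
    simp [hQbarₗ, Submodule.liftQ_apply]
    rfl
  have hQbar_cont : Continuous Qbarₗ := by
    rw [N.isOpenQuotientMap_mkQ.isQuotientMap.continuous_iff]
    have : (Qbarₗ ∘ N.mkQ) = g := by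
      ext x; exact hQbarₗ_mk x
    rw [this]
    exact g.continuous
  set Qbar : (X ⧸ N) →L[ℝ] X ⧸ N := ⟨Qbarₗ, hQbar_cont⟩ with hQbar
  set Pbar : (X ⧸ N) →L[ℝ] X ⧸ N := ContinuousLinearMap.id ℝ (X ⧸ N) - Qbar with hPbar
  have hPbar_mk : ∀ x : X, Pbar (N.mkQ x) = N.mkQ (P x) := fun x => by
    have : Pbar (N.mkQ x) = N.mkQ x - Qbarₗ (N.mkQ x) := rfl
    rw [this, hQbarₗ_mk, ← map_sub]
    congr 1
    simp [hQ]
  -- the image subspace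
  refine ⟨W.map N.mkQ, ?_, ?_, ?_, ?_⟩
  · rw [← hZ'map]; exact Submodule.map_mono hZ'W
  · rw [← N.isOpenQuotientMap_mkQ.isQuotientMap.isClosed_preimage]
    have : N.mkQ ⁻¹' (W.map N.mkQ : Set (X ⧸ N)) = (W : Set X) := by
      have h2 : Submodule.comap N.mkQ (W.map N.mkQ) = W := by
        rw [Submodule.comap_map_eq, Submodule.ker_mkQ, sup_eq_left.mpr hNW]
      exact congrArg (fun s : Submodule ℝ X => (s : Set X)) h2
    rw [this]
    exact hWclosed
  · intro h
    have e := Submodule.quotientQuotientEquivQuotient N W hNW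
    exact hWcodim e.finiteDimensional
  · -- closed complemented
    have hmem : ∀ y : X ⧸ N, Pbar y ∈ W.map N.mkQ := by
      intro y
      obtain ⟨x, rfl⟩ := N.mkQ_surjective y
      rw [hPbar_mk]
      exact Submodule.mem_map_of_mem (hPW x)
    refine ⟨Pbar.codRestrict _ hmem, ?_⟩
    rintro ⟨y, hy⟩
    obtain ⟨w, hw, rfl⟩ := hy
    ext
    simp only [ContinuousLinearMap.coe_codRestrict_apply]
    show Pbar (N.mkQ w) = N.mkQ w
    rw [hPbar_mk, hPid w hw]
end

section
/- Let X and Y be Banach spaces. Every strictly singular operator K : X → Y belongs to the perturbation class PΦ₊(X,Y); that is, if T : X → Y is upper semi-Fredholm and K is strictly singular, then T + K is upper semi-Fredholm. -/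
open Function

namespace SSAux

open Function LinearMap

variable {X Y : Type*} [NormedAddCommGroup X] [NormedSpace ℝ X] [CompleteSpace X]
  [NormedAddCommGroup Y] [NormedSpace ℝ Y] [CompleteSpace Y]

omit [CompleteSpace X] [CompleteSpace Y] in
lemma isClosed_sup_of_fd (A B : Submodule ℝ X) (hA : IsClosed (A : Set X))
    (hB : FiniteDimensional ℝ B) : IsClosed ((A ⊔ B : Submodule ℝ X) : Set X) := by
  haveI : IsClosed (A : Set X) := hA
  have h2 : IsClosed ((B.map A.mkQ : Submodule ℝ (X ⧸ A)) : Set (X ⧸ A)) :=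
    Submodule.closed_of_finiteDimensional _
  have h3 : (A ⊔ B : Submodule ℝ X) = (B.map A.mkQ).comap A.mkQ := by
    rw [Submodule.comap_map_eq, Submodule.ker_mkQ, sup_comm]
  rw [h3]
  exact h2.preimage A.isOpenQuotientMap_mkQ.continuous

/-- Lemma A: upper semi-Fredholm implies bounded below on a closed finite-codimensional
subspace. -/
lemma lemA (T : X →L[ℝ] Y) (h1 : FiniteDimensional ℝ (ker (T : X →ₗ[ℝ] Y)))
    (h2 : IsClosed (range (T : X →ₗ[ℝ] Y) : Set Y)) :
    ∃ M : Submodule ℝ X, IsClosed (M : Set X) ∧ FiniteDimensional ℝ (X ⧸ M) ∧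
      ∃ c : ℝ, 0 < c ∧ ∀ x ∈ M, c * ‖x‖ ≤ ‖T x‖ := by
  obtain ⟨M, hMc, hcompl⟩ :=
    (Submodule.ClosedComplemented.of_finiteDimensional (ker (T : X →ₗ[ℝ] Y))).exists_isClosed_isCompl
  refine ⟨M, hMc, ?_, ?_⟩
  · haveI : FiniteDimensional ℝ (ker (T : X →ₗ[ℝ] Y)) := h1
    exact (M.quotientEquivOfIsCompl (ker (T : X →ₗ[ℝ] Y)) hcompl.symm).symm.finiteDimensional
  · haveI : CompleteSpace M := hMc.completeSpace_coe
    haveI : CompleteSpace (range (T : X →ₗ[ℝ] Y)) := h2.completeSpace_coe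
    set f : M →L[ℝ] range (T : X →ₗ[ℝ] Y) :=
      (T.codRestrict (range (T : X →ₗ[ℝ] Y)) (fun x => mem_range_self _ x)).comp M.subtypeL with hf
    have hinj : ker (f : M →ₗ[ℝ] range (T : X →ₗ[ℝ] Y)) = ⊥ := by
      rw [Submodule.eq_bot_iff]
      rintro ⟨x, hxM⟩ hx
      have : T x = 0 := by
        have := congrArg (Subtype.val) (show f ⟨x, hxM⟩ = 0 from hx)
        simpa [hf] using this
      have hxk : x ∈ ker (T : X →ₗ[ℝ] Y) := this
      have := hcompl.inf_eq_bot
      have : x ∈ (⊥ : Submodule ℝ X) := this ▸ Submodule.mem_inf.2 ⟨hxk, hxM⟩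
      simpa using this
    have hsurj : LinearMap.range (f : M →ₗ[ℝ] range (T : X →ₗ[ℝ] Y)) = ⊤ := by
      rw [Submodule.eq_top_iff']
      rintro ⟨y, hy⟩
      obtain ⟨x, rfl⟩ := hy
      obtain ⟨k, hk, m, hm, rfl⟩ : ∃ k ∈ ker (T : X →ₗ[ℝ] Y), ∃ m ∈ M, k + m = x := by
        have := hcompl.sup_eq_top
        have hx : x ∈ (ker (T : X →ₗ[ℝ] Y)) ⊔ M := by rw [this]; trivial
        obtain ⟨k, hk, m, hm, h⟩ := Submodule.mem_sup.1 hx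
        exact ⟨k, hk, m, hm, h⟩
      refine ⟨⟨m, hm⟩, ?_⟩
      apply Subtype.ext
      simp [hf, map_add, (mem_ker.1 hk)]
    set e := ContinuousLinearEquiv.ofBijective f hinj hsurj
    refine ⟨(‖(e.symm : range (T : X →ₗ[ℝ] Y) →L[ℝ] M)‖ + 1)⁻¹, by positivity, ?_⟩
    intro x hxM
    have key : ‖(⟨x, hxM⟩ : M)‖ ≤ (‖(e.symm : range (T : X →ₗ[ℝ] Y) →L[ℝ] M)‖ + 1) * ‖T x‖ := by
      have h1' : e.symm (e ⟨x, hxM⟩) = ⟨x, hxM⟩ := e.symm_apply_apply _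
      calc ‖(⟨x, hxM⟩ : M)‖ = ‖e.symm (e ⟨x, hxM⟩)‖ := by rw [h1']
        _ ≤ ‖(e.symm : range (T : X →ₗ[ℝ] Y) →L[ℝ] M)‖ * ‖e ⟨x, hxM⟩‖ :=
            (e.symm : range (T : X →ₗ[ℝ] Y) →L[ℝ] M).le_opNorm _
        _ ≤ (‖(e.symm : range (T : X →ₗ[ℝ] Y) →L[ℝ] M)‖ + 1) * ‖e ⟨x, hxM⟩‖ := by
            apply mul_le_mul_of_nonneg_right (by linarith) (norm_nonneg _)
        _ = (‖(e.symm : range (T : X →ₗ[ℝ] Y) →L[ℝ] M)‖ + 1) * ‖T x‖ := by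
            have : ‖e ⟨x, hxM⟩‖ = ‖T x‖ := by
              show ‖(f ⟨x, hxM⟩ : Y)‖ = ‖T x‖
              simp [hf]
            rw [this]
    have hxn : ‖(⟨x, hxM⟩ : M)‖ = ‖x‖ := rfl
    rw [hxn] at key
    rw [inv_mul_le_iff₀ (by positivity)]
    linarith [key]

/-- Lemma C: bounded below on a closed finite-codimensional subspace implies
upper semi-Fredholm. -/
lemma lemC (S : X →L[ℝ] Y) (N : Submodule ℝ X) (hNc : IsClosed (N : Set X))
    (hNq : FiniteDimensional ℝ (X ⧸ N)) (c : ℝ) (hc : 0 < c)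
    (hb : ∀ x ∈ N, c * ‖x‖ ≤ ‖S x‖) :
    FiniteDimensional ℝ (ker (S : X →ₗ[ℝ] Y)) ∧ IsClosed (range (S : X →ₗ[ℝ] Y) : Set Y) := by
  constructor
  · have hinj : Injective (N.mkQ.comp (ker (S : X →ₗ[ℝ] Y)).subtype) := by
      intro a b hab
      have h : N.mkQ (a.1 - b.1) = 0 := by
        rw [map_sub]
        simpa [Submodule.mkQ_apply] using sub_eq_zero.2 hab
      have hmem : (a.1 - b.1) ∈ N := by rwa [← Submodule.ker_mkQ (p := N)]
      have hker : (a.1 - b.1) ∈ ker (S : X →ₗ[ℝ] Y) := sub_mem a.2 b.2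
      have := hb _ hmem
      rw [show S (a.1 - b.1) = 0 from mem_ker.1 hker] at this
      simp only [norm_zero] at this
      have : ‖a.1 - b.1‖ ≤ 0 := by nlinarith [norm_nonneg (a.1-b.1)]
      have : a.1 - b.1 = 0 := norm_eq_zero.1 (le_antisymm this (norm_nonneg _))
      exact Subtype.ext (sub_eq_zero.1 this)
    exact FiniteDimensional.of_injective (N.mkQ.comp (ker (S : X →ₗ[ℝ] Y)).subtype) hinj
  · haveI : CompleteSpace N := hNc.completeSpace_coe
    set g : N →L[ℝ] Y := S.comp N.subtypeL with hg
    have hal : AntilipschitzWith (⟨c, hc.le⟩ : NNReal)⁻¹ g := by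
      apply AntilipschitzWith.of_le_mul_dist
      intro x y
      simp only [dist_eq_norm, NNReal.coe_inv, ← map_sub]
      have := hb (x.1 - y.1) (sub_mem x.2 y.2)
      have hgxy : g (x - y) = S (x.1 - y.1) := by simp [hg]
      rw [hgxy]
      have goal' : ‖x.1 - y.1‖ ≤ c⁻¹ * ‖S (x.1 - y.1)‖ := by
        rw [le_inv_mul_iff₀ hc]; exact this
      exact goal'
    have hclosedSN : IsClosed (Set.range g) := hal.isClosed_range g.uniformContinuous
    have hrangeg : Set.range g = ((N.map (S : X →ₗ[ℝ] Y) : Submodule ℝ Y) : Set Y) := by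
      ext y
      constructor
      · rintro ⟨⟨x, hx⟩, rfl⟩; exact ⟨x, hx, rfl⟩
      · rintro ⟨x, hx, rfl⟩; exact ⟨⟨x, hx⟩, rfl⟩
    obtain ⟨F, hF⟩ := Submodule.exists_isCompl N
    haveI : FiniteDimensional ℝ F := (N.quotientEquivOfIsCompl F hF).finiteDimensional
    have hsum : (range (S : X →ₗ[ℝ] Y) : Submodule ℝ Y) =
        (N.map (S : X →ₗ[ℝ] Y)) ⊔ (F.map (S : X →ₗ[ℝ] Y)) := by
      rw [← Submodule.map_sup, hF.sup_eq_top, Submodule.map_top]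
    rw [hsum]
    exact isClosed_sup_of_fd _ _ (hrangeg ▸ hclosedSN) inferInstance

/-- One step of the construction. -/
lemma step (S : X →L[ℝ] Y) (M : Submodule ℝ X) (hMc : IsClosed (M : Set X))
    (hMq : FiniteDimensional ℝ (X ⧸ M))
    (H : ∀ N : Submodule ℝ X, IsClosed (N : Set X) → FiniteDimensional ℝ (X ⧸ N) →
      ∀ ε : ℝ, 0 < ε → ∃ x ∈ N, ‖x‖ = 1 ∧ ‖S x‖ ≤ ε)
    (ε : ℝ) (hε : 0 < ε) (n : ℕ) (x : Fin n → X) (g : Fin n → (X →L[ℝ] ℝ))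
    (hx1 : ∀ i, ‖x i‖ = 1)
    (hbio : ∀ i j, g i (x j) = if i = j then 1 else 0)
    (hgn : ∀ i : Fin n, ‖g i‖ ≤ 2 ^ (i : ℕ)) :
    ∃ (x' : X) (g' : X →L[ℝ] ℝ), ‖x'‖ = 1 ∧ x' ∈ M ∧ ‖S x'‖ ≤ ε * (4:ℝ)⁻¹ ^ n ∧
      (∀ i : Fin n, g i x' = 0) ∧ g' x' = 1 ∧ (∀ i : Fin n, g' (x i) = 0) ∧
      ‖g'‖ ≤ 2 ^ n := by
  classical
  set N : Submodule ℝ X := M ⊓ ⨅ i : Fin n, ker (g i : X →ₗ[ℝ] ℝ) with hN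
  have hNc : IsClosed (N : Set X) := by
    have : (N : Set X) = (M : Set X) ∩ ⋂ i : Fin n, (ker (g i : X →ₗ[ℝ] ℝ) : Set X) := by
      simp [hN, Submodule.coe_iInf]
    rw [this]
    refine hMc.inter (isClosed_iInter fun i => ?_)
    have : (ker (g i : X →ₗ[ℝ] ℝ) : Set X) = (g i) ⁻¹' {0} := by
      ext z; simp [LinearMap.mem_ker]
    rw [this]
    exact isClosed_singleton.preimage (g i).continuous
  have hNq : FiniteDimensional ℝ (X ⧸ N) := by
    set ψ : X →ₗ[ℝ] (X ⧸ M) × (Fin n → ℝ) :=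
      (M.mkQ).prod (LinearMap.pi fun i => (g i : X →ₗ[ℝ] ℝ)) with hψ
    have hker : ker ψ = N := by
      rw [hψ, LinearMap.ker_prod, Submodule.ker_mkQ, LinearMap.ker_pi, hN]
    haveI : FiniteDimensional ℝ ((X ⧸ M) × (Fin n → ℝ)) := by infer_instance
    have e := (ψ.quotKerEquivRange).symm
    rw [hker] at e
    exact (LinearEquiv.finiteDimensional (e.symm.symm))
  obtain ⟨x', hx'N, hx'1, hx'S⟩ := H N hNc hNq (ε * (4:ℝ)⁻¹ ^ n) (by positivity)
  have hx'M : x' ∈ M := hx'N.1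
  have hx'ker : ∀ i : Fin n, g i x' = 0 := by
    intro i
    exact (Submodule.mem_iInf _).1 hx'N.2 i
  obtain ⟨f, hf1, hfx⟩ := exists_dual_vector ℝ x' (by intro h; rw [h] at hx'1; simp at hx'1)
  set g' : X →L[ℝ] ℝ := f - ∑ i : Fin n, f (x i) • g i with hg'
  refine ⟨x', g', hx'1, hx'M, hx'S, hx'ker, ?_, ?_, ?_⟩
  · simp only [hg', ContinuousLinearMap.sub_apply, ContinuousLinearMap.sum_apply,
      ContinuousLinearMap.smul_apply, hx'ker, smul_zero, Finset.sum_const_zero, sub_zero]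
    rw [hfx, hx'1]
    norm_num
  · intro j
    simp only [hg', ContinuousLinearMap.sub_apply, ContinuousLinearMap.sum_apply,
      ContinuousLinearMap.smul_apply, hbio, smul_eq_mul, mul_ite, mul_one, mul_zero]
    rw [Finset.sum_ite_eq' Finset.univ j (fun i => f (x i))]
    simp
  · have h1 : ‖g'‖ ≤ ‖f‖ + ∑ i : Fin n, ‖f (x i) • g i‖ := by
      rw [hg']
      refine (norm_sub_le _ _).trans ?_
      gcongr
      exact norm_sum_le _ _
    have h2 : ∀ i : Fin n, ‖f (x i) • g i‖ ≤ 2 ^ (i : ℕ) := by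
      intro i
      refine (norm_smul_le (f (x i)) (g i)).trans ?_
      calc ‖f (x i)‖ * ‖g i‖ ≤ 1 * 2 ^ (i : ℕ) := by
            apply mul_le_mul _ (hgn i) (norm_nonneg _) zero_le_one
            calc ‖f (x i)‖ ≤ ‖f‖ * ‖x i‖ := f.le_opNorm _
              _ ≤ 1 := by rw [hf1, hx1]; norm_num
        _ = 2 ^ (i : ℕ) := one_mul _
    have h3 : ∑ i : Fin n, ((2:ℝ)) ^ (i : ℕ) = 2 ^ n - 1 := by
      rw [Fin.sum_univ_eq_sum_range (fun i => (2:ℝ) ^ i) n, geom_sum_eq (by norm_num)]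
      norm_num
    have h4 : ∑ i : Fin n, ‖f (x i) • g i‖ ≤ 2 ^ n - 1 := by
      rw [← h3]; exact Finset.sum_le_sum fun i _ => h2 i
    rw [hf1] at h1
    linarith

def SeqInv (S : X →L[ℝ] Y) (M : Submodule ℝ X) (ε : ℝ) (n : ℕ)
    (p : (Fin n → X) × (Fin n → (X →L[ℝ] ℝ))) : Prop :=
  (∀ i, ‖p.1 i‖ = 1) ∧ (∀ i, p.1 i ∈ M) ∧
  (∀ i : Fin n, ‖S (p.1 i)‖ ≤ ε * (4:ℝ)⁻¹ ^ (i : ℕ)) ∧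
  (∀ i j, p.2 i (p.1 j) = if i = j then 1 else 0) ∧
  (∀ i : Fin n, ‖p.2 i‖ ≤ 2 ^ (i : ℕ))

def StepHyp (S : X →L[ℝ] Y) (M : Submodule ℝ X) (ε : ℝ) : Prop :=
  ∀ (n : ℕ) (x : Fin n → X) (g : Fin n → (X →L[ℝ] ℝ)),
      (∀ i, ‖x i‖ = 1) → (∀ i j, g i (x j) = if i = j then 1 else 0) →
      (∀ i : Fin n, ‖g i‖ ≤ 2 ^ (i : ℕ)) →
      ∃ (x' : X) (g' : X →L[ℝ] ℝ), ‖x'‖ = 1 ∧ x' ∈ M ∧ ‖S x'‖ ≤ ε * (4:ℝ)⁻¹ ^ n ∧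
        (∀ i : Fin n, g i x' = 0) ∧ g' x' = 1 ∧ (∀ i : Fin n, g' (x i) = 0) ∧
        ‖g'‖ ≤ 2 ^ n

omit [CompleteSpace X] [CompleteSpace Y] in
lemma extend_exists (S : X →L[ℝ] Y) (M : Submodule ℝ X) (ε : ℝ)
    (hstep : StepHyp S M ε) (n : ℕ) (p : (Fin n → X) × (Fin n → (X →L[ℝ] ℝ)))
    (hp : SeqInv S M ε n p) :
    ∃ q : (Fin (n+1) → X) × (Fin (n+1) → (X →L[ℝ] ℝ)), SeqInv S M ε (n+1) q ∧
      (∀ i : Fin n, q.1 i.castSucc = p.1 i) ∧ (∀ i : Fin n, q.2 i.castSucc = p.2 i) := by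
  obtain ⟨hx1, hxM, hxS, hbio, hgn⟩ := hp
  obtain ⟨x', g', h1, h2, h3, h4, h5, h6, h7⟩ := hstep n p.1 p.2 hx1 hbio hgn
  refine ⟨(Fin.snoc p.1 x', Fin.snoc p.2 g'), ⟨?_, ?_, ?_, ?_, ?_⟩, ?_, ?_⟩
  · intro i
    induction i using Fin.lastCases with
    | last => simpa using h1
    | cast i => simpa using hx1 i
  · intro i
    induction i using Fin.lastCases with
    | last => simpa using h2
    | cast i => simpa using hxM i
  · intro i
    induction i using Fin.lastCases with
    | last => simpa using h3
    | cast i => simpa using hxS i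
  · intro i j
    induction i using Fin.lastCases with
    | last =>
      induction j using Fin.lastCases with
      | last => simpa using h5
      | cast j =>
        have : (Fin.last n = j.castSucc) = False := by
          simp [eq_comm, (Fin.castSucc_lt_last j).ne]
        simpa [this] using h6 j
    | cast i =>
      induction j using Fin.lastCases with
      | last =>
        have : (i.castSucc = Fin.last n) = False := by
          simp [(Fin.castSucc_lt_last i).ne]
        simpa [this] using h4 i
      | cast j =>
        have := hbio i j
        simp only [Fin.snoc_castSucc]
        rw [this]
        simp [Fin.castSucc_inj]
  · intro i
    induction i using Fin.lastCases with
    | last => simpa using h7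
    | cast i =>
      simp only [Fin.snoc_castSucc]
      calc ‖p.2 i‖ ≤ 2 ^ (i : ℕ) := hgn i
        _ ≤ 2 ^ ((i.castSucc : Fin (n+1)) : ℕ) := by norm_num
  · intro i; simp
  · intro i; simp

variable (S : X →L[ℝ] Y) (M : Submodule ℝ X) (ε : ℝ) (hstep : StepHyp S M ε)

noncomputable def hist : (n : ℕ) →
    {p : (Fin n → X) × (Fin n → (X →L[ℝ] ℝ)) // SeqInv S M ε n p}
  | 0 => ⟨(fun i => i.elim0, fun i => i.elim0),
      ⟨fun i => i.elim0, fun i => i.elim0, fun i => i.elim0, fun i => i.elim0,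
        fun i => i.elim0⟩⟩
  | n+1 =>
    ⟨Classical.choose (extend_exists S M ε hstep n (hist n).1 (hist n).2),
     (Classical.choose_spec (extend_exists S M ε hstep n (hist n).1 (hist n).2)).1⟩

omit [CompleteSpace X] [CompleteSpace Y] in
lemma hist_compat (n : ℕ) :
    (∀ i : Fin n, (hist S M ε hstep (n+1)).1.1 i.castSucc = (hist S M ε hstep n).1.1 i) ∧
    (∀ i : Fin n, (hist S M ε hstep (n+1)).1.2 i.castSucc = (hist S M ε hstep n).1.2 i) := by
  have := (Classical.choose_spec
    (extend_exists S M ε hstep n (hist S M ε hstep n).1 (hist S M ε hstep n).2)).2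
  exact this

noncomputable def useq (n : ℕ) : X := (hist S M ε hstep (n+1)).1.1 (Fin.last n)
noncomputable def hseq (n : ℕ) : X →L[ℝ] ℝ := (hist S M ε hstep (n+1)).1.2 (Fin.last n)

omit [CompleteSpace X] [CompleteSpace Y] in
lemma hist_eq (n : ℕ) (i : Fin n) :
    (hist S M ε hstep n).1.1 i = useq S M ε hstep i ∧
    (hist S M ε hstep n).1.2 i = hseq S M ε hstep i := by
  induction n with
  | zero => exact i.elim0
  | succ n ih =>
    induction i using Fin.lastCases with
    | last => exact ⟨rfl, rfl⟩
    | cast i =>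
      have hc := hist_compat S M ε hstep n
      have h1 := (hc.1 i).trans (ih i).1
      have h2 := (hc.2 i).trans (ih i).2
      constructor
      · rw [h1]; rfl
      · rw [h2]; rfl

omit [CompleteSpace X] [CompleteSpace Y] in
lemma seq_exists (hstep : StepHyp S M ε) :
    ∃ (u : ℕ → X) (h : ℕ → (X →L[ℝ] ℝ)),
      (∀ n, ‖u n‖ = 1) ∧ (∀ n, u n ∈ M) ∧ (∀ n, ‖S (u n)‖ ≤ ε * (4:ℝ)⁻¹ ^ n) ∧
      (∀ i j : ℕ, h i (u j) = if i = j then 1 else 0) ∧ (∀ n, ‖h n‖ ≤ 2 ^ n) := by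
  refine ⟨useq S M ε hstep, hseq S M ε hstep, ?_, ?_, ?_, ?_, ?_⟩
  · intro n
    have := ((hist S M ε hstep (n+1)).2).1 (Fin.last n)
    simpa [useq] using this
  · intro n
    exact ((hist S M ε hstep (n+1)).2).2.1 (Fin.last n)
  · intro n
    have := ((hist S M ε hstep (n+1)).2).2.2.1 (Fin.last n)
    simpa [useq, Fin.val_last] using this
  · intro i j
    set n := max i j + 1 with hn
    have hi : i < n := by omega
    have hj : j < n := by omega
    have hb := ((hist S M ε hstep n).2).2.2.2.1 ⟨i, hi⟩ ⟨j, hj⟩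
    have e1 := (hist_eq S M ε hstep n ⟨i, hi⟩).2
    have e2 := (hist_eq S M ε hstep n ⟨j, hj⟩).1
    rw [e1, e2] at hb
    rw [hb]
    simp [Fin.mk.injEq]
  · intro n
    have := ((hist S M ε hstep (n+1)).2).2.2.2.2 (Fin.last n)
    simpa [hseq, Fin.val_last] using this

end SSAux

theorem strictlySingular_mem_pertUpperSemiFredholm
    {X Y : Type*} [NormedAddCommGroup X] [NormedSpace ℝ X] [CompleteSpace X]
    [NormedAddCommGroup Y] [NormedSpace ℝ Y] [CompleteSpace Y]
    (K : X →L[ℝ] Y) (hK : StrictlySingular K) :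
    PertUpperSemiFredholm K := by
  intro T hT
  classical
  obtain ⟨hker, hrange⟩ := hT
  obtain ⟨M, hMc, hMq, c, hc, hbdd⟩ := SSAux.lemA T hker hrange
  by_cases hcase : ∃ N : Submodule ℝ X, IsClosed (N : Set X) ∧ FiniteDimensional ℝ (X ⧸ N) ∧
      ∃ c' : ℝ, 0 < c' ∧ ∀ x ∈ N, c' * ‖x‖ ≤ ‖(T + K) x‖
  · obtain ⟨N, h1, h2, c', h3, h4⟩ := hcase
    exact SSAux.lemC (T + K) N h1 h2 c' h3 h4
  · exfalso
    push_neg at hcase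
    set S := T + K with hS
    have H : ∀ N : Submodule ℝ X, IsClosed (N : Set X) → FiniteDimensional ℝ (X ⧸ N) →
        ∀ ε : ℝ, 0 < ε → ∃ x ∈ N, ‖x‖ = 1 ∧ ‖S x‖ ≤ ε := by
      intro N hNc hNq ε hε
      obtain ⟨x, hxN, hx⟩ := hcase N hNc hNq ε hε
      have hx0 : x ≠ 0 := by
        intro h
        rw [h] at hx
        simp at hx
      have hxn : (0:ℝ) < ‖x‖ := norm_pos_iff.2 hx0
      refine ⟨‖x‖⁻¹ • x, N.smul_mem _ hxN, ?_, ?_⟩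
      · rw [norm_smul, norm_inv, norm_norm, inv_mul_cancel₀ hxn.ne']
      · rw [map_smul, norm_smul, norm_inv, norm_norm]
        rw [inv_mul_le_iff₀ hxn]
        calc ‖S x‖ ≤ ε * ‖x‖ := hx.le
          _ = ‖x‖ * ε := by ring
    set ε : ℝ := c / 8 with hεdef
    have hε : 0 < ε := by positivity
    have hstep : SSAux.StepHyp S M ε := fun n x g hx1 hbio hgn =>
      SSAux.step S M hMc hMq H ε hε n x g hx1 hbio hgn
    obtain ⟨u, h, hu1, huM, huS, hbio, hhn⟩ := SSAux.seq_exists S M ε hstep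
    set U0 := Submodule.span ℝ (Set.range u) with hU0
    have hspan_le : U0 ≤ M := Submodule.span_le.2 (by rintro _ ⟨n, rfl⟩; exact huM n)
    -- coefficient extraction
    have hco : ∀ (cf : ℕ →₀ ℝ) (i : ℕ),
        h i (cf.sum fun j a => a • u j) = cf i := by
      intro cf i
      rw [Finsupp.sum, map_sum]
      have hterm : ∀ j ∈ cf.support, h i (cf j • u j) = if i = j then cf j else 0 := by
        intro j _
        rw [map_smul, smul_eq_mul, hbio i j]
        split_ifs <;> simp
      rw [Finset.sum_congr rfl hterm, Finset.sum_ite_eq]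
      split_ifs with hmem
      · rfl
      · exact (Finsupp.notMem_support_iff.1 hmem).symm
    have hest : ∀ z ∈ U0, ‖S z‖ ≤ 2 * ε * ‖z‖ := by
      intro z hz
      rw [hU0, Finsupp.mem_span_range_iff_exists_finsupp] at hz
      obtain ⟨cf, hcf⟩ := hz
      have hcoef : ∀ i : ℕ, |cf i| ≤ 2 ^ i * ‖z‖ := by
        intro i
        have h1 : cf i = h i z := by rw [← hcf, hco]
        rw [h1]
        calc |h i z| = ‖h i z‖ := (Real.norm_eq_abs _).symm
          _ ≤ ‖h i‖ * ‖z‖ := (h i).le_opNorm z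
          _ ≤ 2 ^ i * ‖z‖ := by
              apply mul_le_mul_of_nonneg_right (hhn i) (norm_nonneg z)
      have hSz : S z = ∑ i ∈ cf.support, cf i • S (u i) := by
        rw [← hcf, Finsupp.sum, map_sum]
        simp only [map_smul]
      rw [hSz]
      refine (norm_sum_le _ _).trans ?_
      have hterm : ∀ i ∈ cf.support, ‖cf i • S (u i)‖ ≤ (ε * ‖z‖) * (2:ℝ)⁻¹ ^ i := by
        intro i _
        rw [norm_smul, Real.norm_eq_abs]
        calc |cf i| * ‖S (u i)‖ ≤ (2 ^ i * ‖z‖) * (ε * (4:ℝ)⁻¹ ^ i) := by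
              apply mul_le_mul (hcoef i) (huS i) (norm_nonneg _) (by positivity)
          _ = (ε * ‖z‖) * ((2:ℝ) ^ i * (4:ℝ)⁻¹ ^ i) := by ring
          _ = (ε * ‖z‖) * (2:ℝ)⁻¹ ^ i := by
              rw [← mul_pow]
              norm_num
      refine (Finset.sum_le_sum hterm).trans ?_
      rw [← Finset.mul_sum]
      obtain ⟨Nn, hNn⟩ := Finset.exists_nat_subset_range cf.support
      have hgeo : ∑ i ∈ cf.support, ((2:ℝ)⁻¹) ^ i ≤ 2 := by
        refine le_trans (Finset.sum_le_sum_of_subset_of_nonneg hNn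
          (fun i _ _ => by positivity)) ?_
        rw [geom_sum_eq (by norm_num : (2:ℝ)⁻¹ ≠ 1)]
        rw [div_le_iff_of_neg (by norm_num : (2:ℝ)⁻¹ - 1 < 0)]
        have := pow_nonneg (by norm_num : (0:ℝ) ≤ 2⁻¹) Nn
        nlinarith
      calc (ε * ‖z‖) * ∑ i ∈ cf.support, ((2:ℝ)⁻¹) ^ i ≤ (ε * ‖z‖) * 2 := by
            apply mul_le_mul_of_nonneg_left hgeo (by positivity)
        _ = 2 * ε * ‖z‖ := by ring
    have hKlow : ∀ z ∈ U0, (c/2) * ‖z‖ ≤ ‖K z‖ := by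
      intro z hz
      have h1 := hbdd z (hspan_le hz)
      have h2 := hest z hz
      have h3 : ‖T z‖ ≤ ‖S z‖ + ‖K z‖ := by
        have hTz : T z = S z - K z := by
          rw [hS]; simp
        rw [hTz]
        exact norm_sub_le _ _
      have h4 : 2 * ε = c / 4 := by rw [hεdef]; ring
      nlinarith [norm_nonneg z, norm_nonneg (K z)]
    set U := U0.topologicalClosure with hU
    have hUc : IsClosed (U : Set X) := U0.isClosed_topologicalClosure
    have hKlowU : ∀ z ∈ U, (c/2) * ‖z‖ ≤ ‖K z‖ := by
      have hCclosed : IsClosed {z : X | (c/2) * ‖z‖ ≤ ‖K z‖} :=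
        isClosed_le (continuous_const.mul continuous_norm) (K.continuous.norm)
      have hsub : (U : Set X) ⊆ {z : X | (c/2) * ‖z‖ ≤ ‖K z‖} := by
        rw [hU, Submodule.topologicalClosure_coe]
        exact closure_minimal hKlow hCclosed
      exact fun z hz => hsub hz
    have hUinf : ¬ FiniteDimensional ℝ U := by
      intro hfin
      have humem : ∀ n, u n ∈ U := fun n =>
        Submodule.le_topologicalClosure U0 (Submodule.subset_span ⟨n, rfl⟩)
      have hli : LinearIndependent ℝ u := by
        rw [linearIndependent_iff']
        intro s gc hsum i hi
        have := congrArg (h i) hsum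
        rw [map_sum, map_zero] at this
        have hterm : ∀ j ∈ s, h i (gc j • u j) = if i = j then gc j else 0 := by
          intro j _
          rw [map_smul, smul_eq_mul, hbio i j]
          split_ifs <;> simp
        rw [Finset.sum_congr rfl hterm, Finset.sum_ite_eq] at this
        simpa [hi] using this
      set v : ℕ → U := fun n => ⟨u n, humem n⟩ with hv
      have hliv : LinearIndependent ℝ v := by
        apply LinearIndependent.of_comp U.subtype
        convert hli
        exact funext fun n => rfl
      have hcard := hliv.cardinalMk_le_finrank
      rw [Cardinal.mk_nat] at hcard
      exact absurd hcard (not_le.2 (Cardinal.nat_lt_aleph0 _))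
    exact hK ⟨U, hUc, hUinf, c/2, by positivity, hKlowU⟩
end

section
/- Let K : X → Y be a bounded operator between Banach spaces, let U be a closed infinite-dimensional subspace of X such that the restriction of K to U is an isomorphism onto its image, and let L be a closed subspace of Y such that K(U) ∩ L is finite-dimensional and K(U) + L is not closed. Then there exists a compact operator K₁ : X → Y such that (K + K₁)(U) ∩ L is infinite-dimensional. -/
open Function

set_option maxHeartbeats 1000000
set_option synthInstance.maxHeartbeats 1000000
section MyAuxiliary
open Metric Submodule Set Filter Topology

section Aux
variable {Y : Type*} [NormedAddCommGroup Y] [NormedSpace ℝ Y]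

private lemma my_infDist_sub_le (S : Submodule ℝ Y) (y m : Y) (hm : m ∈ S) :
    infDist (y - m) (S : Set Y) ≤ infDist y (S : Set Y) := by
  refine le_of_forall_pos_le_add fun ε hε => ?_
  obtain ⟨s, hs, hds⟩ := (infDist_lt_iff ⟨0, S.zero_mem⟩).mp
    (lt_add_of_pos_right (infDist y (S : Set Y)) hε)
  calc infDist (y - m) (S : Set Y) ≤ dist (y - m) (s - m) :=
        infDist_le_dist_of_mem (S.sub_mem hs hm)
    _ = dist y s := by rw [dist_eq_norm, dist_eq_norm]; congr 1; abel
    _ ≤ infDist y (S : Set Y) + ε := hds.le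

lemma my_infDist_sub (S : Submodule ℝ Y) (y m : Y) (hm : m ∈ S) :
    infDist (y - m) (S : Set Y) = infDist y (S : Set Y) := by
  refine le_antisymm (my_infDist_sub_le S y m hm) ?_
  have := my_infDist_sub_le S (y - m) (-m) (S.neg_mem hm)
  simpa using this

private lemma my_infDist_smul_le (S : Submodule ℝ Y) (t : ℝ) (ht : 0 < t) (y : Y) :
    infDist (t • y) (S : Set Y) ≤ t * infDist y (S : Set Y) := by
  refine le_of_forall_pos_le_add fun ε hε => ?_
  obtain ⟨s, hs, hds⟩ := (infDist_lt_iff ⟨0, S.zero_mem⟩).mp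
    (lt_add_of_pos_right (infDist y (S : Set Y)) (div_pos hε ht))
  calc infDist (t • y) (S : Set Y) ≤ dist (t • y) (t • s) :=
        infDist_le_dist_of_mem (S.smul_mem t hs)
    _ = t * dist y s := by
        rw [dist_eq_norm, dist_eq_norm, ← smul_sub, norm_smul, Real.norm_eq_abs,
          abs_of_pos ht]
    _ ≤ t * (infDist y (S : Set Y) + ε / t) := by nlinarith [hds.le]
    _ = t * infDist y (S : Set Y) + ε := by field_simp

lemma my_infDist_smul (S : Submodule ℝ Y) (t : ℝ) (ht : 0 < t) (y : Y) :
    infDist (t • y) (S : Set Y) = t * infDist y (S : Set Y) := by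
  refine le_antisymm (my_infDist_smul_le S t ht y) ?_
  have h2 := my_infDist_smul_le S t⁻¹ (by positivity) (t • y)
  rw [inv_smul_smul₀ ht.ne'] at h2
  have h3 : t * infDist y (S : Set Y) ≤ t * (t⁻¹ * infDist (t • y) (S : Set Y)) := by
    exact mul_le_mul_of_nonneg_left h2 ht.le
  rwa [← mul_assoc, mul_inv_cancel₀ ht.ne', one_mul] at h3

/-- Kato-type criterion: if distances to `L` dominate distances to `S ⊓ L` on `S`,
then `S ⊔ L` is closed. -/
lemma my_sup_closed_of_gap [CompleteSpace Y] (S L : Submodule ℝ Y)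
    (hS : IsClosed (S : Set Y)) (hL : IsClosed (L : Set Y)) (c : ℝ) (hc : 0 < c)
    (h : ∀ y ∈ S, c * infDist y ((S ⊓ L : Submodule ℝ Y) : Set Y) ≤ infDist y (L : Set Y)) :
    IsClosed ((S ⊔ L : Submodule ℝ Y) : Set Y) := by
  refine isClosed_of_closure_subset fun w hw => ?_
  obtain ⟨v, hv, hvw⟩ := mem_closure_iff_seq_limit.mp hw
  choose s hsS l hlL hsl using fun k => Submodule.mem_sup.mp (hv k)
  -- pick indices where v is very close to w
  have : ∀ k : ℕ, ∃ N : ℕ, ∀ j ≥ N, dist (v j) w < c * (1/2)^k / 4 := by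
    intro k
    have := (Metric.tendsto_atTop.mp hvw) (c * (1/2)^k / 4) (by positivity)
    exact this
  choose N hN using this
  set a : ℕ → Y := fun k => s (N k) with ha
  have hdiff : ∀ k, infDist (a (k+1) - a k) (L : Set Y) < c * (1/2)^k := by
    intro k
    have h1 : dist (v (N (k+1))) w < c * (1/2)^(k+1) / 4 := hN (k+1) _ le_rfl
    have h2 : dist (v (N k)) w < c * (1/2)^k / 4 := hN k _ le_rfl
    have hmem : (l (N k)) - (l (N (k+1))) ∈ L := L.sub_mem (hlL _) (hlL _)
    have : infDist (a (k+1) - a k) (L : Set Y)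
        ≤ dist (a (k+1) - a k) (l (N k) - l (N (k+1))) := infDist_le_dist_of_mem hmem
    have heq : dist (a (k+1) - a k) (l (N k) - l (N (k+1)))
        = dist (v (N (k+1))) (v (N k)) := by
      rw [dist_eq_norm, dist_eq_norm, ← hsl (N (k+1)), ← hsl (N k)]
      congr 1; abel
    have h3 : dist (v (N (k+1))) (v (N k)) ≤ dist (v (N (k+1))) w + dist (v (N k)) w :=
      dist_triangle_right _ _ _
    have hpow : c * (1/2)^(k+1) / 4 ≤ c * (1/2)^k / 4 := by
      have : ((1:ℝ)/2)^(k+1) ≤ (1/2)^k := by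
        apply pow_le_pow_of_le_one (by norm_num) (by norm_num) (Nat.le_succ k)
      nlinarith
    calc infDist (a (k+1) - a k) (L : Set Y) ≤ dist (v (N (k+1))) (v (N k)) := heq ▸ this
      _ ≤ dist (v (N (k+1))) w + dist (v (N k)) w := h3
      _ < c * (1/2)^k / 4 + c * (1/2)^k / 4 := by linarith [lt_of_lt_of_le h1 hpow]
      _ ≤ c * (1/2)^k := by nlinarith [pow_pos (by norm_num : (0:ℝ) < 1/2) k]
  have hdiff2 : ∀ k, infDist (a (k+1) - a k) ((S ⊓ L : Submodule ℝ Y) : Set Y) < (1/2)^k + (1/2)^k := by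
    intro k
    have hmem : a (k+1) - a k ∈ S := S.sub_mem (hsS _) (hsS _)
    have := h _ hmem
    have h2 := hdiff k
    nlinarith [pow_pos (by norm_num : (0:ℝ) < 1/2) k,
      infDist_nonneg (x := a (k+1) - a k) (s := ((S ⊓ L : Submodule ℝ Y) : Set Y))]
  have hmk : ∀ k, ∃ m ∈ (S ⊓ L : Submodule ℝ Y), dist (a (k+1) - a k) m < 2 * (1/2)^k := by
    intro k
    have := (infDist_lt_iff (⟨0, Submodule.zero_mem _⟩ :
      ((S ⊓ L : Submodule ℝ Y) : Set Y).Nonempty)).mp (by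
        calc infDist (a (k+1) - a k) ((S ⊓ L : Submodule ℝ Y) : Set Y)
            < (1/2)^k + (1/2)^k := hdiff2 k
          _ = 2 * (1/2)^k := by ring)
    exact this
  choose m hmSL hmd using hmk
  set b : ℕ → Y := fun k => a k - ∑ i ∈ Finset.range k, m i with hb
  have hbdist : ∀ k, dist (b k) (b (k+1)) ≤ 2 * (1/2)^k := by
    intro k
    rw [dist_eq_norm]
    have : b k - b (k+1) = -((a (k+1) - a k) - m k) := by
      simp only [hb, Finset.sum_range_succ]; abel
    rw [this, norm_neg, ← dist_eq_norm]
    exact (hmd k).le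
  have hcauchy : CauchySeq b := cauchySeq_of_le_geometric (1/2) 2 (by norm_num) hbdist
  obtain ⟨p, hp⟩ := cauchySeq_tendsto_of_complete hcauchy
  have hbS : ∀ k, b k ∈ S := fun k => S.sub_mem (hsS _)
    (Submodule.sum_mem _ fun i _ => ((Submodule.mem_inf.mp (hmSL i)).1))
  have hpS : p ∈ S := hS.mem_of_tendsto hp (Filter.Eventually.of_forall hbS)
  -- v (N k) - b k ∈ L and tends to w - p
  have hvN : Tendsto (fun k => v (N k)) atTop (𝓝 w) := by
    rw [Metric.tendsto_atTop]
    intro ε hε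
    obtain ⟨k₀, hk₀⟩ := exists_pow_lt_of_lt_one (show (0:ℝ) < ε / (c/4 + 1) by positivity)
      (show (1:ℝ)/2 < 1 by norm_num)
    refine ⟨k₀, fun k hk => ?_⟩
    have h1 : dist (v (N k)) w < c * (1/2)^k / 4 := hN k _ le_rfl
    have h2 : ((1:ℝ)/2)^k ≤ (1/2)^k₀ := pow_le_pow_of_le_one (by norm_num) (by norm_num) hk
    have h3 : c * (1/2)^k / 4 < ε := by
      have hc4 : c/4 + 1 > 0 := by positivity
      have := hk₀
      calc c * (1/2)^k / 4 ≤ c * (1/2)^k₀ / 4 := by nlinarith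
        _ < (c/4 + 1) * (ε / (c/4+1)) := by nlinarith [pow_pos (show (0:ℝ) < 1/2 by norm_num) k₀]
        _ = ε := by field_simp
    linarith
  have hLmem : ∀ k, v (N k) - b k ∈ L := by
    intro k
    have : v (N k) - b k = l (N k) + ∑ i ∈ Finset.range k, m i := by
      rw [hb, ← hsl (N k)]; simp only [ha]; abel
    rw [this]
    exact L.add_mem (hlL _) (Submodule.sum_mem _ fun i _ => (Submodule.mem_inf.mp (hmSL i)).2)
  have hwp : w - p ∈ L := hL.mem_of_tendsto (hvN.sub hp) (Filter.Eventually.of_forall hLmem)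
  exact Submodule.mem_sup.mpr ⟨p, hpS, w - p, hwp, by abel⟩

end Aux


section Aux2
variable {Y : Type*} [NormedAddCommGroup Y] [NormedSpace ℝ Y]


/-- From non-closedness of the sum: almost-in-`L` unit-ish vectors far from `S ⊓ L`. -/
lemma my_kato [CompleteSpace Y] (S L : Submodule ℝ Y)
    (hS : IsClosed (S : Set Y)) (hL : IsClosed (L : Set Y))
    (hnc : ¬ IsClosed ((S ⊔ L : Submodule ℝ Y) : Set Y)) :
    ∀ ε > 0, ∃ y ∈ S, ‖y‖ ≤ 2 ∧ 1 ≤ infDist y ((S ⊓ L : Submodule ℝ Y) : Set Y) ∧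
      infDist y (L : Set Y) < ε := by
  intro ε hε
  by_contra hcon
  push_neg at hcon
  -- there is y ∈ S with infDist y L < (ε/2) * infDist y (S⊓L)
  have hex : ∃ y ∈ S, infDist y (L : Set Y) < (ε/2) * infDist y ((S ⊓ L : Submodule ℝ Y) : Set Y) := by
    by_contra hno
    push_neg at hno
    exact hnc (my_sup_closed_of_gap S L hS hL (ε/2) (by positivity) hno)
  obtain ⟨y, hyS, hy⟩ := hex
  set d := infDist y ((S ⊓ L : Submodule ℝ Y) : Set Y) with hd
  have hd0 : 0 < d := by
    rcases lt_or_ge 0 d with h | h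
    · exact h
    · exfalso
      have : infDist y (L : Set Y) < 0 := lt_of_lt_of_le hy (by nlinarith)
      exact absurd this (not_lt.mpr infDist_nonneg)
  obtain ⟨m, hm, hmd⟩ := (infDist_lt_iff (⟨0, Submodule.zero_mem _⟩ :
      ((S ⊓ L : Submodule ℝ Y) : Set Y).Nonempty)).mp (show d < 2 * d by linarith)
  set y₁ := y - m with hy₁
  have hy₁S : y₁ ∈ S := S.sub_mem hyS (Submodule.mem_inf.mp hm).1
  have h1 : infDist y₁ ((S ⊓ L : Submodule ℝ Y) : Set Y) = d := my_infDist_sub _ y m hm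
  have h2 : infDist y₁ (L : Set Y) = infDist y (L : Set Y) :=
    my_infDist_sub L y m (Submodule.mem_inf.mp hm).2
  set y₂ := d⁻¹ • y₁ with hy₂
  have hy₂S : y₂ ∈ S := S.smul_mem _ hy₁S
  have h3 : infDist y₂ ((S ⊓ L : Submodule ℝ Y) : Set Y) = 1 := by
    rw [hy₂, my_infDist_smul _ d⁻¹ (by positivity), h1, inv_mul_cancel₀ hd0.ne']
  have h4 : infDist y₂ (L : Set Y) < ε := by
    rw [hy₂, my_infDist_smul L d⁻¹ (by positivity), h2]
    calc d⁻¹ * infDist y (L : Set Y) < d⁻¹ * ((ε/2) * d) := by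
          apply mul_lt_mul_of_pos_left hy (by positivity)
      _ = ε/2 := by field_simp
      _ < ε := by linarith
  have h5 : ‖y₂‖ ≤ 2 := by
    have hn : ‖y₁‖ < 2 * d := by rw [← dist_eq_norm]; exact hmd
    have : ‖y₂‖ = d⁻¹ * ‖y₁‖ := by
      rw [hy₂, norm_smul, Real.norm_eq_abs, abs_of_pos (by positivity : (0:ℝ) < d⁻¹)]
    rw [this]
    have hid : d⁻¹ * (2 * d) = 2 := by field_simp
    nlinarith [inv_pos.mpr hd0, norm_nonneg y₁]
  exact absurd h4 (not_lt.mpr (hcon y₂ hy₂S h5 h3.ge))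

/-- Moreover we can stay far away from a given finite-dimensional subspace `G`. -/
lemma my_kato_avoid [CompleteSpace Y] (S L G : Submodule ℝ Y)
    (hS : IsClosed (S : Set Y)) (hL : IsClosed (L : Set Y))
    (hnc : ¬ IsClosed ((S ⊔ L : Submodule ℝ Y) : Set Y)) [FiniteDimensional ℝ G] :
    ∃ c > 0, ∀ ε > 0, ∃ y ∈ S, c ≤ infDist y (G : Set Y) ∧ infDist y (L : Set Y) < ε ∧
      ‖y‖ ≤ 2 := by
  have hsel := my_kato S L hS hL hnc
  have hseq : ∀ j : ℕ, ∃ y ∈ S, ‖y‖ ≤ 2 ∧ 1 ≤ infDist y ((S ⊓ L : Submodule ℝ Y) : Set Y) ∧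
      infDist y (L : Set Y) < (j+1:ℝ)⁻¹ := fun j => hsel _ (by positivity)
  choose y hyS hynorm hyfar hynear using hseq
  -- claim: ∃ c > 0 with infinitely many j s.t. infDist (y j) G ≥ c
  have hclaim : ∃ c > 0, ∀ N : ℕ, ∃ j ≥ N, c ≤ infDist (y j) (G : Set Y) := by
    by_contra hno
    push_neg at hno
    have htend : Tendsto (fun j => infDist (y j) (G : Set Y)) atTop (𝓝 0) := by
      rw [Metric.tendsto_atTop]
      intro δ hδ
      obtain ⟨N, hN⟩ := hno δ hδ
      refine ⟨N, fun j hj => ?_⟩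
      rw [Real.dist_eq, sub_zero, abs_of_nonneg infDist_nonneg]
      exact hN j hj
    -- choose near points g j ∈ G
    have hg : ∀ j : ℕ, ∃ g ∈ G, dist (y j) g < infDist (y j) (G : Set Y) + (j+1:ℝ)⁻¹ := by
      intro j
      exact (infDist_lt_iff ⟨0, G.zero_mem⟩).mp (lt_add_of_pos_right _ (by positivity))
    choose g hgG hgd using hg
    have hgbound : ∀ j, ‖g j‖ ≤ 5 := by
      intro j
      have h1 : infDist (y j) (G : Set Y) ≤ ‖y j‖ := by
        simpa [dist_eq_norm] using infDist_le_dist_of_mem (G.zero_mem)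
      have h2 : dist (y j) (g j) < 2 + 1 := by
        have : ((j:ℝ)+1)⁻¹ ≤ 1 := by
          rw [inv_le_one_iff₀]; right; linarith [Nat.cast_nonneg (α := ℝ) j]
        calc dist (y j) (g j) < infDist (y j) (G : Set Y) + (j+1:ℝ)⁻¹ := hgd j
          _ ≤ 2 + 1 := by linarith [hynorm j, h1]
      have h3 : ‖g j‖ - ‖y j‖ ≤ ‖g j - y j‖ := norm_sub_norm_le _ _
      have h4 : ‖g j - y j‖ = dist (y j) (g j) := by rw [dist_eq_norm, norm_sub_rev]
      linarith [hynorm j]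
    -- pass to the submodule with compact balls
    set g' : ℕ → G := fun j => ⟨g j, hgG j⟩ with hg'
    have hg'mem : ∀ j, g' j ∈ Metric.closedBall (0 : G) 5 := by
      intro j
      rw [Metric.mem_closedBall, dist_zero_right]
      exact (hgbound j)
    obtain ⟨gl, hglmem, φ, hφmono, hφtend⟩ :=
      (isCompact_closedBall (0 : G) 5).tendsto_subseq hg'mem
    have hgtend : Tendsto (fun k => g (φ k)) atTop (𝓝 (gl : Y)) :=
      (continuous_subtype_val.tendsto gl).comp hφtend
    -- y (φ k) → gl
    have hdiff : Tendsto (fun k => dist (y (φ k)) (g (φ k))) atTop (𝓝 0) := by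
      have hbd : ∀ k, dist (y (φ k)) (g (φ k)) ≤ infDist (y (φ k)) (G : Set Y) + ((φ k:ℝ)+1)⁻¹ :=
        fun k => (hgd (φ k)).le
      have h1 : Tendsto (fun k => infDist (y (φ k)) (G : Set Y)) atTop (𝓝 0) :=
        htend.comp hφmono.tendsto_atTop
      have h2 : Tendsto (fun k => ((φ k:ℝ)+1)⁻¹) atTop (𝓝 0) := by
        apply Tendsto.comp (tendsto_inv_atTop_zero)
        apply tendsto_atTop_add_const_right
        exact tendsto_natCast_atTop_atTop.comp hφmono.tendsto_atTop
      have := h1.add h2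
      rw [add_zero] at this
      exact squeeze_zero (fun k => dist_nonneg) hbd this
    have hytend : Tendsto (fun k => y (φ k)) atTop (𝓝 (gl : Y)) := by
      have : Tendsto (fun k => (y (φ k) - g (φ k)) + g (φ k)) atTop (𝓝 (0 + (gl : Y))) := by
        apply Tendsto.add ?_ hgtend
        rw [tendsto_zero_iff_norm_tendsto_zero]
        simpa [dist_eq_norm] using hdiff
      simpa using this
    have hglS : (gl : Y) ∈ S := hS.mem_of_tendsto hytend (Eventually.of_forall fun k => hyS _)
    have hglL : (gl : Y) ∈ L := by
      have h0 : Tendsto (fun k => infDist (y (φ k)) (L : Set Y)) atTop (𝓝 0) := by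
        have hbd : ∀ k, infDist (y (φ k)) (L : Set Y) ≤ ((φ k:ℝ)+1)⁻¹ := fun k => (hynear _).le
        have h2 : Tendsto (fun k => ((φ k:ℝ)+1)⁻¹) atTop (𝓝 0) := by
          apply Tendsto.comp (tendsto_inv_atTop_zero)
          apply tendsto_atTop_add_const_right
          exact tendsto_natCast_atTop_atTop.comp hφmono.tendsto_atTop
        exact squeeze_zero (fun k => infDist_nonneg) hbd h2
      have hcont : Tendsto (fun k => infDist (y (φ k)) (L : Set Y)) atTop
          (𝓝 (infDist (gl : Y) (L : Set Y))) :=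
        ((continuous_infDist_pt (L : Set Y)).tendsto _).comp hytend
      have : infDist (gl : Y) (L : Set Y) = 0 := tendsto_nhds_unique hcont h0
      have := ((mem_closure_iff_infDist_zero ⟨0, L.zero_mem⟩).mpr this)
      rwa [hL.closure_eq] at this
    have hfar : 1 ≤ infDist (gl : Y) ((S ⊓ L : Submodule ℝ Y) : Set Y) := by
      have hcont : Tendsto (fun k => infDist (y (φ k)) ((S ⊓ L : Submodule ℝ Y) : Set Y)) atTop
          (𝓝 (infDist (gl : Y) ((S ⊓ L : Submodule ℝ Y) : Set Y))) :=
        ((continuous_infDist_pt _).tendsto _).comp hytend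
      exact le_of_tendsto_of_tendsto tendsto_const_nhds hcont
        (Eventually.of_forall fun k => hyfar _)
    have : infDist (gl : Y) ((S ⊓ L : Submodule ℝ Y) : Set Y) = 0 :=
      infDist_zero_of_mem (Submodule.mem_inf.mpr ⟨hglS, hglL⟩)
    linarith
  obtain ⟨c, hc, hinf⟩ := hclaim
  refine ⟨c, hc, fun ε hε => ?_⟩
  obtain ⟨J, hJ⟩ := exists_nat_gt (ε⁻¹)
  obtain ⟨j, hjJ, hjc⟩ := hinf J
  refine ⟨y j, hyS j, hjc, ?_, hynorm j⟩
  have h1 : ((j:ℝ)+1)⁻¹ < ε := by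
    rw [inv_lt_comm₀ (by positivity) hε]
    calc ε⁻¹ < (J:ℝ) := hJ
      _ ≤ (j:ℝ) := by exact_mod_cast hjJ
      _ < (j:ℝ) + 1 := by linarith
  exact lt_trans (hynear j) h1
end Aux2


section Aux3
variable {X Y : Type*} [NormedAddCommGroup X] [NormedSpace ℝ X]
  [NormedAddCommGroup Y] [NormedSpace ℝ Y]

/-- A closed subspace plus a line is closed. -/
lemma my_isClosed_sup_span_singleton (S : Submodule ℝ Y) (hS : IsClosed (S : Set Y)) (v : Y) :
    IsClosed ((S ⊔ span ℝ {v} : Submodule ℝ Y) : Set Y) := by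
  by_cases hv : v ∈ S
  · have : span ℝ {v} ≤ S := (span_singleton_le_iff_mem v S).mpr hv
    rw [sup_eq_left.mpr this]; exact hS
  · have hd : 0 < infDist v (S : Set Y) := by
      rcases (lt_or_ge 0 (infDist v (S : Set Y))) with h | h
      · exact h
      · exfalso
        have h0 : infDist v (S : Set Y) = 0 := le_antisymm h infDist_nonneg
        have := (mem_closure_iff_infDist_zero ⟨0, S.zero_mem⟩).mpr h0
        rw [hS.closure_eq] at this
        exact hv this
    set d := infDist v (S : Set Y) with hdd
    -- coefficient bound : ‖s + t • v‖ ≥ |t| * d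
    have hbound : ∀ (s : Y), s ∈ S → ∀ t : ℝ, |t| * d ≤ ‖s + t • v‖ := by
      intro s hs t
      rcases eq_or_ne t 0 with rfl | ht
      · simp [norm_nonneg]
      · have h1 : d ≤ dist v (-(t⁻¹ • s)) := infDist_le_dist_of_mem (S.neg_mem (S.smul_mem _ hs))
        rw [dist_eq_norm] at h1
        have h2 : ‖s + t • v‖ = |t| * ‖v - (-(t⁻¹ • s))‖ := by
          rw [← Real.norm_eq_abs, ← norm_smul]
          congr 1
          rw [smul_sub, smul_neg, smul_smul, mul_inv_cancel₀ ht, one_smul]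
          abel
        rw [h2]
        exact mul_le_mul_of_nonneg_left h1 (abs_nonneg t)
    refine isClosed_of_closure_subset fun w hw => ?_
    obtain ⟨u, hu, huw⟩ := mem_closure_iff_seq_limit.mp hw
    have : ∀ n, ∃ s ∈ S, ∃ t : ℝ, s + t • v = u n := by
      intro n
      obtain ⟨s, hs, x, hx, hsx⟩ := Submodule.mem_sup.mp (hu n)
      obtain ⟨t, ht⟩ := mem_span_singleton.mp hx
      exact ⟨s, hs, t, by rw [ht]; exact hsx⟩
    choose s hsS t hst using this
    have hbb : BddAbove (Set.range fun n => ‖u n‖) := (huw.norm).bddAbove_range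
    obtain ⟨R, hR'⟩ := hbb
    have hR : ∀ n, ‖u n‖ ≤ R := fun n => hR' (Set.mem_range_self n)
    have htbdd : ∀ n, |t n| ≤ R / d := by
      intro n
      have := hbound (s n) (hsS n) (t n)
      rw [hst n] at this
      have := le_trans this (hR n)
      rw [le_div_iff₀ hd]
      linarith
    -- Bolzano–Weierstrass on ℝ
    have hmem : ∀ n, t n ∈ Metric.closedBall (0:ℝ) (R/d) := by
      intro n
      rw [Metric.mem_closedBall, Real.dist_eq, sub_zero]
      exact htbdd n
    obtain ⟨t₀, _, φ, hφ, hφt⟩ := (isCompact_closedBall (0:ℝ) (R/d)).tendsto_subseq hmem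
    have hstend : Tendsto (fun k => s (φ k)) atTop (𝓝 (w - t₀ • v)) := by
      have h1 : Tendsto (fun k => u (φ k) - t (φ k) • v) atTop (𝓝 (w - t₀ • v)) :=
        (huw.comp hφ.tendsto_atTop).sub (hφt.smul_const v)
      convert h1 using 2 with k
      rw [← hst (φ k)]; abel
    have hwS : w - t₀ • v ∈ S := hS.mem_of_tendsto hstend (Eventually.of_forall fun k => hsS _)
    exact Submodule.mem_sup.mpr ⟨w - t₀ • v, hwS, t₀ • v,
      mem_span_singleton.mpr ⟨t₀, rfl⟩, by abel⟩

/-- A closed subspace plus a finite-dimensional subspace is closed. -/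
lemma my_isClosed_sup_fd (S F : Submodule ℝ Y) (hS : IsClosed (S : Set Y))
    [FiniteDimensional ℝ F] : IsClosed ((S ⊔ F : Submodule ℝ Y) : Set Y) := by
  classical
  obtain ⟨fs, hfs⟩ : F.FG := (Submodule.fg_iff_finiteDimensional F).mpr ‹_›
  subst hfs
  induction fs using Finset.induction_on generalizing S with
  | empty => simpa using hS
  | @insert a s ha ih =>
    have h1 : span ℝ (↑(insert a s) : Set Y) = span ℝ (↑s : Set Y) ⊔ span ℝ {a} := by
      rw [Finset.coe_insert, Set.insert_eq, span_union, sup_comm]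
    rw [h1, ← sup_assoc]
    exact my_isClosed_sup_span_singleton _ (ih S hS) a
end Aux3


section Aux4
variable {X Y : Type*} [NormedAddCommGroup X] [NormedSpace ℝ X]
  [NormedAddCommGroup Y] [NormedSpace ℝ Y]

/-- Image of a closed subspace under an operator bounded below on it is closed. -/
lemma my_isClosed_map (K : X →L[ℝ] Y) [CompleteSpace X] (U' : Submodule ℝ X)
    (hU' : IsClosed (U' : Set X)) (c : ℝ) (hc : 0 < c)
    (hb : ∀ u ∈ U', c * ‖u‖ ≤ ‖K u‖) :
    IsClosed ((U'.map (K : X →ₗ[ℝ] Y) : Submodule ℝ Y) : Set Y) := by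
  haveI : CompleteSpace U' := IsClosed.completeSpace_coe (hs := hU')
  set f : U' →L[ℝ] Y := K.comp (U'.subtypeL) with hf
  have hanti : AntilipschitzWith (⟨c⁻¹, by positivity⟩ : NNReal) f := by
    apply f.antilipschitz_of_bound
    intro x
    have := hb x x.2
    have hcc : (⟨c⁻¹, by positivity⟩ : NNReal) = (c⁻¹ : ℝ) := rfl
    show ‖(x : X)‖ ≤ c⁻¹ * ‖K x‖
    rw [← le_div_iff₀' (by positivity)] at *
    · calc ‖(x : X)‖ ≤ ‖K (x:X)‖ / c := by
            rw [le_div_iff₀ hc]; linarith [hb x x.2]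
        _ = c⁻¹ * ‖K (x:X)‖ := by field_simp
  have hrange : (Set.range f) = ((U'.map (K : X →ₗ[ℝ] Y) : Submodule ℝ Y) : Set Y) := by
    ext y
    constructor
    · rintro ⟨x, rfl⟩; exact ⟨x, x.2, rfl⟩
    · rintro ⟨x, hx, rfl⟩; exact ⟨⟨x, hx⟩, rfl⟩
  rw [← hrange]
  exact hanti.isClosed_range f.uniformContinuous

/-- Hahn-Banach: a functional vanishing on a finite-dimensional subspace. -/
lemma my_exists_functional (E : Submodule ℝ X) [FiniteDimensional ℝ E] (u : X) (d : ℝ)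
    (hd : 0 < d) (h : ∀ v ∈ E, d ≤ ‖u - v‖) :
    ∃ f : X →L[ℝ] ℝ, f u = 1 ∧ (∀ v ∈ E, f v = 0) ∧ ‖f‖ ≤ d⁻¹ := by
  haveI : IsClosed (E : Set X) := E.closed_of_finiteDimensional
  set q : X →L[ℝ] X ⧸ E := LinearMap.mkContinuous E.mkQ 1
    (fun x => by simpa using Submodule.Quotient.norm_mk_le E x) with hq
  have hqx : ∀ x : X, q x = Submodule.Quotient.mk x := fun x => rfl
  have hnorm : d ≤ ‖q u‖ := by
    refine le_of_forall_pos_le_add fun ε hε => ?_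
    obtain ⟨m, hm, hmn⟩ := Submodule.Quotient.norm_mk_lt (q u) hε
    have : u - m ∈ E := by
      rw [hqx] at hm
      have := (Submodule.Quotient.eq E).mp hm.symm
      simpa using this
    have h2 := h (u - m) this
    simp only [sub_sub_cancel] at h2
    linarith
  have hne : q u ≠ 0 := by
    intro h0; rw [h0, norm_zero] at hnorm; linarith
  obtain ⟨g, hgnorm, hgval⟩ := exists_dual_vector ℝ (q u) (norm_ne_zero_iff.mpr hne)
  refine ⟨(‖q u‖)⁻¹ • (g.comp q), ?_, ?_, ?_⟩
  · simp only [ContinuousLinearMap.smul_apply, ContinuousLinearMap.comp_apply]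
    rw [hgval]
    simp only [RCLike.ofReal_real_eq_id, id_eq]
    exact inv_mul_cancel₀ (ne_of_gt (lt_of_lt_of_le hd hnorm))
  · intro v hv
    simp only [ContinuousLinearMap.smul_apply, ContinuousLinearMap.comp_apply]
    have : q v = 0 := by rw [hqx]; exact (Submodule.Quotient.mk_eq_zero E).mpr hv
    rw [this, map_zero, smul_zero]
  · have h1 : ‖g.comp q‖ ≤ ‖g‖ * ‖q‖ := ContinuousLinearMap.opNorm_comp_le _ _
    have h2 : ‖q‖ ≤ 1 := LinearMap.mkContinuous_norm_le _ zero_le_one _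
    have h3 : ‖(‖q u‖)⁻¹ • (g.comp q)‖ ≤ (‖q u‖)⁻¹ * ‖g.comp q‖ := by
      refine (norm_smul_le ((‖q u‖)⁻¹) (g.comp q)).trans_eq ?_
      rw [Real.norm_eq_abs, abs_of_nonneg (by positivity)]
    refine h3.trans ?_
    have h4 : (‖q u‖)⁻¹ ≤ d⁻¹ := by
      apply inv_anti₀ hd hnorm
    calc (‖q u‖)⁻¹ * ‖g.comp q‖ ≤ (‖q u‖)⁻¹ * 1 := by
          apply mul_le_mul_of_nonneg_left _ (by positivity)
          calc ‖g.comp q‖ ≤ ‖g‖ * ‖q‖ := h1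
            _ ≤ 1 * 1 := by rw [hgnorm]; exact mul_le_mul_of_nonneg_left h2 zero_le_one
            _ = 1 := one_mul 1
      _ = (‖q u‖)⁻¹ := mul_one _
      _ ≤ d⁻¹ := h4

/-- Finite codimension of intersections with kernels. -/
lemma my_codim (A : Submodule ℝ X) (f : ℕ → (X →L[ℝ] ℝ)) :
    ∀ n : ℕ, ∃ W : Submodule ℝ X, FiniteDimensional ℝ W ∧ W ≤ A ∧
      A ≤ (A ⊓ ⨅ i ∈ Finset.range n, LinearMap.ker (f i : X →ₗ[ℝ] ℝ)) ⊔ W := by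
  intro n
  induction n with
  | zero =>
    refine ⟨⊥, inferInstance, bot_le, ?_⟩
    simp
  | succ n ih =>
    obtain ⟨W, hWfd, hWA, hA⟩ := ih
    set B := A ⊓ ⨅ i ∈ Finset.range n, LinearMap.ker (f i : X →ₗ[ℝ] ℝ) with hB
    have hstep : A ⊓ ⨅ i ∈ Finset.range (n+1), LinearMap.ker (f i : X →ₗ[ℝ] ℝ)
        = B ⊓ LinearMap.ker (f n : X →ₗ[ℝ] ℝ) := by
      rw [hB, Finset.range_add_one]
      rw [inf_assoc]
      congr 1
      rw [Finset.iInf_insert, inf_comm]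
    by_cases hzero : ∀ b ∈ B, f n b = 0
    · refine ⟨W, hWfd, hWA, ?_⟩
      rw [hstep]
      have : B ≤ B ⊓ LinearMap.ker (f n : X →ₗ[ℝ] ℝ) := le_inf le_rfl (fun b hb => hzero b hb)
      exact le_trans hA (sup_le_sup_right this W)
    · push_neg at hzero
      obtain ⟨a, haB, hfa⟩ := hzero
      refine ⟨W ⊔ span ℝ {a}, inferInstance, sup_le hWA ((span_singleton_le_iff_mem a A).mpr
        ((inf_le_left : B ≤ A) haB)), ?_⟩
      rw [hstep]
      have hkey : B ≤ (B ⊓ LinearMap.ker (f n : X →ₗ[ℝ] ℝ)) ⊔ span ℝ {a} := by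
        intro b hb
        have hmem : b - (f n b / f n a) • a ∈ B ⊓ LinearMap.ker (f n : X →ₗ[ℝ] ℝ) := by
          refine Submodule.mem_inf.mpr ⟨?_, ?_⟩
          · exact B.sub_mem hb (B.smul_mem _ haB)
          · rw [LinearMap.mem_ker]
            simp only [map_sub, map_smul, smul_eq_mul, ContinuousLinearMap.coe_coe]
            field_simp; simp
        have : b = (b - (f n b / f n a) • a) + (f n b / f n a) • a := by abel
        rw [this]
        exact Submodule.add_mem _ (Submodule.mem_sup_left hmem)
          (Submodule.mem_sup_right (Submodule.smul_mem _ _ (subset_span rfl)))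
      calc A ≤ B ⊔ W := hA
        _ ≤ ((B ⊓ LinearMap.ker (f n : X →ₗ[ℝ] ℝ)) ⊔ span ℝ {a}) ⊔ W := sup_le_sup_right hkey W
        _ = (B ⊓ LinearMap.ker (f n : X →ₗ[ℝ] ℝ)) ⊔ (W ⊔ span ℝ {a}) := by
            rw [sup_assoc, sup_comm (span ℝ {a}) W]
end Aux4


section Aux5
variable {X Y : Type*} [NormedAddCommGroup X] [NormedSpace ℝ X]
  [NormedAddCommGroup Y] [NormedSpace ℝ Y]


lemma my_sup_eq (K : X →L[ℝ] Y) (U U' W : Submodule ℝ X)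
    (L : Submodule ℝ Y) (hUle : U ≤ U' ⊔ W) (hU'le : U' ≤ U) (hWU : W ≤ U) :
    (U.map (K : X →ₗ[ℝ] Y) ⊔ L : Submodule ℝ Y) = (U'.map (K : X →ₗ[ℝ] Y) ⊔ L) ⊔ W.map (K : X →ₗ[ℝ] Y) := by
  have h1 : U.map (K : X →ₗ[ℝ] Y) ≤ (U' ⊔ W).map (K : X →ₗ[ℝ] Y) := Submodule.map_mono hUle
  have h2 : (U' ⊔ W).map (K : X →ₗ[ℝ] Y) = U'.map (K : X →ₗ[ℝ] Y) ⊔ W.map (K : X →ₗ[ℝ] Y) := Submodule.map_sup _ _ _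
  have h3 : U'.map (K : X →ₗ[ℝ] Y) ≤ U.map (K : X →ₗ[ℝ] Y) := Submodule.map_mono hU'le
  have h4 : W.map (K : X →ₗ[ℝ] Y) ≤ U.map (K : X →ₗ[ℝ] Y) := Submodule.map_mono hWU
  rw [h2] at h1
  apply le_antisymm
  · apply sup_le
    · intro x hx
      rcases Submodule.mem_sup.mp (h1 hx) with ⟨a, ha, b, hb, rfl⟩
      exact Submodule.add_mem _ (Submodule.mem_sup_left (Submodule.mem_sup_left ha))
        (Submodule.mem_sup_right hb)
    · intro x hx
      exact Submodule.mem_sup_left (Submodule.mem_sup_right hx)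
  · apply sup_le (sup_le ?_ ?_) ?_
    · intro x hx; exact Submodule.mem_sup_left (h3 hx)
    · intro x hx; exact Submodule.mem_sup_right hx
    · intro x hx; exact Submodule.mem_sup_left (h4 hx)

/-- The invariant carried through the recursive construction. -/
def MyInv (K : X →L[ℝ] Y) (U : Submodule ℝ X) (L : Submodule ℝ Y)
    (n : ℕ) (u : ℕ → X) (f : ℕ → (X →L[ℝ] ℝ)) (z : ℕ → Y) : Prop :=
  (∀ i < n, u i ∈ U) ∧ (∀ i < n, z i ∈ L) ∧
  (∀ i < n, ∀ j < n, f i (u j) = if i = j then 1 else 0) ∧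
  (∀ i < n, ‖f i‖ * ‖z i - K (u i)‖ ≤ (1/2 : ℝ)^i) ∧
  (∀ i < n, z i ∉ span ℝ (z '' Set.Iio i))

lemma my_step (K : X →L[ℝ] Y) [CompleteSpace X] [CompleteSpace Y]
    (U : Submodule ℝ X) (hU : IsClosed (U : Set X)) (c₀ : ℝ) (hc₀ : 0 < c₀)
    (hb : ∀ u ∈ U, c₀ * ‖u‖ ≤ ‖K u‖)
    (L : Submodule ℝ Y) (hL : IsClosed (L : Set Y))
    (hnc : ¬ IsClosed ((U.map (K : X →ₗ[ℝ] Y) ⊔ L : Submodule ℝ Y) : Set Y))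
    (n : ℕ) (u : ℕ → X) (f : ℕ → (X →L[ℝ] ℝ)) (z : ℕ → Y)
    (hinv : MyInv K U L n u f z) :
    ∃ u' f' z', (∀ i < n, u' i = u i) ∧ (∀ i < n, f' i = f i) ∧ (∀ i < n, z' i = z i) ∧
      MyInv K U L (n+1) u' f' z' := by
  obtain ⟨hu1, hz1, hf1, hn1, hs1⟩ := hinv
  set U' : Submodule ℝ X := U ⊓ ⨅ i ∈ Finset.range n, LinearMap.ker (f i : X →ₗ[ℝ] ℝ) with hU'
  have hU'le : U' ≤ U := inf_le_left
  have hU'closed : IsClosed (U' : Set X) := by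
    have h1 : (U' : Set X) = (U : Set X) ∩
        ((⨅ i ∈ Finset.range n, LinearMap.ker (f i : X →ₗ[ℝ] ℝ) : Submodule ℝ X) : Set X) := by
      rw [hU']; rfl
    rw [h1]
    apply hU.inter
    rw [Submodule.coe_iInf]
    refine isClosed_iInter fun i => ?_
    rw [Submodule.coe_iInf]
    exact isClosed_iInter fun _ => ContinuousLinearMap.isClosed_ker (f i)
  set S : Submodule ℝ Y := U'.map (K : X →ₗ[ℝ] Y) with hS
  have hSclosed : IsClosed (S : Set Y) :=
    my_isClosed_map K U' hU'closed c₀ hc₀ (fun x hx => hb x (hU'le hx))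
  -- S ⊔ L is not closed
  have hncS : ¬ IsClosed ((S ⊔ L : Submodule ℝ Y) : Set Y) := by
    intro hclosed
    obtain ⟨W, hWfd, hWU, hUle⟩ := my_codim U f n
    apply hnc
    have heq : (U.map (K : X →ₗ[ℝ] Y) ⊔ L : Submodule ℝ Y) = (S ⊔ L) ⊔ W.map (K : X →ₗ[ℝ] Y) :=
      my_sup_eq K U U' W L hUle hU'le hWU
    rw [heq]
    haveI : FiniteDimensional ℝ (W.map (K : X →ₗ[ℝ] Y)) := by
      have : W.map (K : X →ₗ[ℝ] Y) = W.map (K : X →ₗ[ℝ] Y) := rfl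
      rw [this]
      exact Module.Finite.map W (K : X →ₗ[ℝ] Y)
    exact my_isClosed_sup_fd _ _ hclosed
  -- the finite-dimensional subspace to avoid
  set G : Submodule ℝ Y := span ℝ ((z '' Set.Iio n) ∪ ((fun i => K (u i)) '' Set.Iio n))
    with hG
  haveI : FiniteDimensional ℝ G := FiniteDimensional.span_of_finite ℝ
    (((Set.finite_Iio n).image z).union ((Set.finite_Iio n).image _))
  obtain ⟨c, hc, hsel⟩ := my_kato_avoid S L G hSclosed hL hncS
  set ε : ℝ := min c ((1/2 : ℝ)^n * (c / (‖K‖+1))) with hε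
  have hεpos : 0 < ε := by
    apply lt_min hc
    have : (0:ℝ) < ‖K‖ + 1 := by positivity
    positivity
  obtain ⟨y, hyS, hyfar, hynear, hynorm⟩ := hsel ε hεpos
  obtain ⟨zn, hznL, hzn⟩ := (infDist_lt_iff ⟨0, L.zero_mem⟩).mp hynear
  obtain ⟨un, hunU', hKun⟩ := hyS
  set d : ℝ := c / (‖K‖ + 1) with hd
  have hdpos : 0 < d := by
    have : (0:ℝ) < ‖K‖ + 1 := by positivity
    positivity
  set E : Submodule ℝ X := span ℝ (u '' Set.Iio n) with hE
  haveI : FiniteDimensional ℝ E := FiniteDimensional.span_of_finite ℝ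
    ((Set.finite_Iio n).image u)
  have hfarE : ∀ v ∈ E, d ≤ ‖un - v‖ := by
    intro v hv
    have hKv : K v ∈ G := by
      have h1 : K v ∈ (span ℝ (u '' Set.Iio n)).map (K : X →ₗ[ℝ] Y) := ⟨v, hv, rfl⟩
      rw [Submodule.map_span, ContinuousLinearMap.coe_coe] at h1
      have h2 : (⇑K '' (u '' Set.Iio n)) = ((fun i => K (u i)) '' Set.Iio n) := by
        rw [Set.image_image]
      rw [h2] at h1
      exact span_mono Set.subset_union_right h1
    have h3 : c ≤ ‖y - K v‖ := by
      have h6 : infDist y (G : Set Y) ≤ dist y (K v) := infDist_le_dist_of_mem hKv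
      rw [dist_eq_norm] at h6
      linarith [hyfar]
    have h4 : ‖y - K v‖ = ‖K (un - v)‖ := by rw [← hKun, ContinuousLinearMap.coe_coe, ← map_sub]
    have h5 : ‖K (un - v)‖ ≤ (‖K‖ + 1) * ‖un - v‖ := by
      calc ‖K (un - v)‖ ≤ ‖K‖ * ‖un - v‖ := K.le_opNorm _
        _ ≤ (‖K‖ + 1) * ‖un - v‖ := by nlinarith [norm_nonneg (un - v)]
    rw [hd, div_le_iff₀ (by positivity : (0:ℝ) < ‖K‖ + 1)]
    nlinarith [h3, h4, h5]
  obtain ⟨fn, hfn1, hfnE, hfnnorm⟩ := my_exists_functional E un d hdpos hfarE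
  refine ⟨fun i => if i = n then un else u i, fun i => if i = n then fn else f i,
    fun i => if i = n then zn else z i, ?_, ?_, ?_, ?_⟩
  · intro i hi; simp [Nat.ne_of_lt hi]
  · intro i hi; simp [Nat.ne_of_lt hi]
  · intro i hi; simp [Nat.ne_of_lt hi]
  · have hunU : un ∈ U := hU'le hunU'
    have hunker : ∀ i < n, f i un = 0 := by
      intro i hi
      have h1 : un ∈ (⨅ i ∈ Finset.range n, LinearMap.ker (f i : X →ₗ[ℝ] ℝ) : Submodule ℝ X) :=
        (Submodule.mem_inf.mp hunU').2
      have h2 := (Submodule.mem_iInf _).mp h1 i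
      have h3 := (Submodule.mem_iInf _).mp h2 (Finset.mem_range.mpr hi)
      exact h3
    refine ⟨?_, ?_, ?_, ?_, ?_⟩
    · intro i hi
      rcases Nat.lt_succ_iff_lt_or_eq.mp hi with h | h
      · simpa [Nat.ne_of_lt h] using hu1 i h
      · simpa [h] using hunU
    · intro i hi
      rcases Nat.lt_succ_iff_lt_or_eq.mp hi with h | h
      · simpa [Nat.ne_of_lt h] using hz1 i h
      · simpa [h] using hznL
    · intro i hi j hj
      rcases Nat.lt_succ_iff_lt_or_eq.mp hi with h | h <;>
        rcases Nat.lt_succ_iff_lt_or_eq.mp hj with h' | h'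
      · beta_reduce
        rw [if_neg (Nat.ne_of_lt h), if_neg (Nat.ne_of_lt h')]
        exact hf1 i h j h'
      · beta_reduce
        rw [if_neg (Nat.ne_of_lt h), if_pos h', if_neg (by omega : i ≠ j)]
        exact hunker i h
      · beta_reduce
        rw [if_pos h, if_neg (Nat.ne_of_lt h'), if_neg (by omega : i ≠ j)]
        exact hfnE _ (subset_span ⟨j, h', rfl⟩)
      · beta_reduce
        rw [if_pos h, if_pos h', if_pos (by omega : i = j)]
        exact hfn1
    · intro i hi
      rcases Nat.lt_succ_iff_lt_or_eq.mp hi with h | h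
      · simpa [Nat.ne_of_lt h] using hn1 i h
      · beta_reduce
        rw [h, if_pos rfl, if_pos rfl, if_pos rfl]
        have h1 : ‖zn - K un‖ < ε := by
          rw [← ContinuousLinearMap.coe_coe K, hKun, ← dist_eq_norm, dist_comm]
          exact hzn
        have h2 : ε ≤ (1/2:ℝ)^n * d := min_le_right _ _
        calc ‖fn‖ * ‖zn - K un‖ ≤ d⁻¹ * ((1/2:ℝ)^n * d) := by
              apply mul_le_mul hfnnorm (le_trans h1.le h2) (norm_nonneg _)
                (by positivity)
          _ = (1/2:ℝ)^n := by field_simp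
    · intro i hi
      rcases Nat.lt_succ_iff_lt_or_eq.mp hi with h | h
      · have himgi : ((fun j => if j = n then zn else z j) '' Set.Iio i) = z '' Set.Iio i := by
          apply Set.image_congr
          intro x hx
          have hxi : x < i := hx
          have : x ≠ n := by omega
          simp [this]
        rw [himgi]
        simpa [Nat.ne_of_lt h] using hs1 i h
      · have himgn : ((fun j => if j = n then zn else z j) '' Set.Iio i) = z '' Set.Iio i := by
          apply Set.image_congr
          intro x hx
          have hxi : x < i := hx
          have : x ≠ n := by omega
          simp [this]
        rw [himgn, h]
        beta_reduce
        rw [if_pos rfl]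
        intro hmem
        have hsub : span ℝ (z '' Set.Iio n) ≤ G := span_mono Set.subset_union_left
        have : zn ∈ G := hsub hmem
        have h1 : c ≤ dist y zn := by
          have h7 : infDist y (G : Set Y) ≤ dist y zn := infDist_le_dist_of_mem this
          linarith [hyfar]
        have h2 : ε ≤ c := min_le_left _ _
        linarith
end Aux5


section Aux6
variable {X Y : Type*} [NormedAddCommGroup X] [NormedSpace ℝ X]
  [NormedAddCommGroup Y] [NormedSpace ℝ Y]

lemma my_seq (K : X →L[ℝ] Y) [CompleteSpace X] [CompleteSpace Y]
    (U : Submodule ℝ X) (hU : IsClosed (U : Set X)) (c₀ : ℝ) (hc₀ : 0 < c₀)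
    (hb : ∀ u ∈ U, c₀ * ‖u‖ ≤ ‖K u‖)
    (L : Submodule ℝ Y) (hL : IsClosed (L : Set Y))
    (hnc : ¬ IsClosed ((U.map (K : X →ₗ[ℝ] Y) ⊔ L : Submodule ℝ Y) : Set Y)) :
    ∃ (u : ℕ → X) (f : ℕ → (X →L[ℝ] ℝ)) (z : ℕ → Y), ∀ n, MyInv K U L n u f z := by
  classical
  have h0 : MyInv K U L 0 (fun _ => 0) (fun _ => 0) (fun _ => 0) := by
    refine ⟨?_, ?_, ?_, ?_, ?_⟩ <;> intro i hi <;> exact absurd hi (Nat.not_lt_zero i)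
  choose u' f' z' ha1 ha2 ha3 hinv' using
    my_step K U hU c₀ hc₀ hb L hL hnc
  let T := (ℕ → X) × (ℕ → (X →L[ℝ] ℝ)) × (ℕ → Y)
  let g : ∀ n : ℕ, {t : T // MyInv K U L n t.1 t.2.1 t.2.2} := fun n =>
    Nat.rec ⟨⟨fun _ => 0, fun _ => 0, fun _ => 0⟩, h0⟩
      (fun m prev => ⟨⟨u' m prev.1.1 prev.1.2.1 prev.1.2.2 prev.2,
                       f' m prev.1.1 prev.1.2.1 prev.1.2.2 prev.2,
                       z' m prev.1.1 prev.1.2.1 prev.1.2.2 prev.2⟩,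
                      hinv' m prev.1.1 prev.1.2.1 prev.1.2.2 prev.2⟩) n
  have hgsucc : ∀ m, (g (m+1)).1 =
      ⟨u' m (g m).1.1 (g m).1.2.1 (g m).1.2.2 (g m).2,
       f' m (g m).1.1 (g m).1.2.1 (g m).1.2.2 (g m).2,
       z' m (g m).1.1 (g m).1.2.1 (g m).1.2.2 (g m).2⟩ := fun m => rfl
  -- agreement of later states with earlier states on early indices
  have hagree : ∀ n m, n ≤ m → ∀ i < n,
      (g m).1.1 i = (g n).1.1 i ∧ (g m).1.2.1 i = (g n).1.2.1 i ∧
      (g m).1.2.2 i = (g n).1.2.2 i := by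
    intro n
    refine Nat.le_induction ?_ ?_
    · intro i hi; exact ⟨rfl, rfl, rfl⟩
    · intro m hnm ih i hi
      have hiltm : i < m := lt_of_lt_of_le hi hnm
      have e1 : (g (m+1)).1.1 i = (g m).1.1 i :=
        ha1 m (g m).1.1 (g m).1.2.1 (g m).1.2.2 (g m).2 i hiltm
      have e2 : (g (m+1)).1.2.1 i = (g m).1.2.1 i :=
        ha2 m (g m).1.1 (g m).1.2.1 (g m).1.2.2 (g m).2 i hiltm
      have e3 : (g (m+1)).1.2.2 i = (g m).1.2.2 i :=
        ha3 m (g m).1.1 (g m).1.2.1 (g m).1.2.2 (g m).2 i hiltm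
      obtain ⟨d1, d2, d3⟩ := ih i hi
      exact ⟨e1.trans d1, e2.trans d2, e3.trans d3⟩
  refine ⟨fun n => (g (n+1)).1.1 n, fun n => (g (n+1)).1.2.1 n,
    fun n => (g (n+1)).1.2.2 n, ?_⟩
  intro n
  obtain ⟨p1, p2, p3, p4, p5⟩ := (g n).2
  have hu_eq : ∀ i < n, (g (i+1)).1.1 i = (g n).1.1 i := by
    intro i hi
    exact ((hagree (i+1) n (Nat.succ_le_of_lt hi) i (Nat.lt_succ_self i)).1).symm
  have hf_eq : ∀ i < n, (g (i+1)).1.2.1 i = (g n).1.2.1 i := by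
    intro i hi
    exact ((hagree (i+1) n (Nat.succ_le_of_lt hi) i (Nat.lt_succ_self i)).2.1).symm
  have hz_eq : ∀ i < n, (g (i+1)).1.2.2 i = (g n).1.2.2 i := by
    intro i hi
    exact ((hagree (i+1) n (Nat.succ_le_of_lt hi) i (Nat.lt_succ_self i)).2.2).symm
  refine ⟨?_, ?_, ?_, ?_, ?_⟩
  · intro i hi; beta_reduce; rw [hu_eq i hi]; exact p1 i hi
  · intro i hi; beta_reduce; rw [hz_eq i hi]; exact p2 i hi
  · intro i hi j hj; beta_reduce; rw [hf_eq i hi, hu_eq j hj]; exact p3 i hi j hj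
  · intro i hi; beta_reduce; rw [hf_eq i hi, hz_eq i hi, hu_eq i hi]; exact p4 i hi
  · intro i hi
    beta_reduce
    have himg : ((fun m => (g (m+1)).1.2.2 m) '' Set.Iio i) = ((g n).1.2.2 '' Set.Iio i) := by
      apply Set.image_congr
      intro x hx
      have hxi : x < i := hx
      exact hz_eq x (lt_trans hxi hi)
    rw [hz_eq i hi, himg]
    exact p5 i hi
end Aux6

lemma my_smulRight_compact {X Y : Type*} [NormedAddCommGroup X] [NormedSpace ℝ X]
    [NormedAddCommGroup Y] [NormedSpace ℝ Y] (φ : X →L[ℝ] ℝ) (v : Y) :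
    IsCompactOperator (φ.smulRight v) := by
  refine ⟨(fun t : ℝ => t • v) '' (Metric.closedBall 0 (‖φ‖+1)), ?_, ?_⟩
  · exact ((isCompact_closedBall 0 _).image (continuous_id.smul continuous_const))
  · apply mem_of_superset (Metric.ball_mem_nhds (0 : X) one_pos)
    intro x hx
    refine ⟨φ x, ?_, rfl⟩
    rw [Metric.mem_closedBall, dist_zero_right, Real.norm_eq_abs]
    have h1 : |φ x| ≤ ‖φ‖ * ‖x‖ := by
      have := φ.le_opNorm x
      rwa [Real.norm_eq_abs] at this
    have h2 : ‖x‖ < 1 := by rwa [Metric.mem_ball, dist_zero_right] at hx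
    nlinarith [norm_nonneg φ, abs_nonneg (φ x)]


end MyAuxiliary

open Metric Submodule Set Filter Topology in
theorem exists_compact_perturbation_infinite_dimensional_intersection
    {X Y : Type*} [NormedAddCommGroup X] [NormedSpace ℝ X] [CompleteSpace X]
    [NormedAddCommGroup Y] [NormedSpace ℝ Y] [CompleteSpace Y]
    (K : X →L[ℝ] Y) (U : Submodule ℝ X) (hU : IsClosed (U : Set X))
    (hUinf : ¬ FiniteDimensional ℝ U)
    (hbelow : ∃ c : ℝ, 0 < c ∧ ∀ u ∈ U, c * ‖u‖ ≤ ‖K u‖)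
    (L : Submodule ℝ Y) (hL : IsClosed (L : Set Y))
    (hfin : FiniteDimensional ℝ ↥(U.map (K : X →ₗ[ℝ] Y) ⊓ L))
    (hnc : ¬ IsClosed ((U.map (K : X →ₗ[ℝ] Y) ⊔ L : Submodule ℝ Y) : Set Y)) :
    ∃ K₁ : X →L[ℝ] Y, IsCompactOperator K₁ ∧
      ¬ FiniteDimensional ℝ ↥(U.map ((K + K₁ : X →L[ℝ] Y) : X →ₗ[ℝ] Y) ⊓ L) := by
  obtain ⟨c₀, hc₀, hb⟩ := hbelow
  obtain ⟨u, f, z, hinv⟩ := my_seq K U hU c₀ hc₀ hb L hL hnc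
  have huU : ∀ i, u i ∈ U := fun i => (hinv (i+1)).1 i (Nat.lt_succ_self i)
  have hzL : ∀ i, z i ∈ L := fun i => (hinv (i+1)).2.1 i (Nat.lt_succ_self i)
  have hf : ∀ i j, f i (u j) = if i = j then 1 else 0 := by
    intro i j
    exact (hinv (max i j + 1)).2.2.1 i (Nat.lt_succ_of_le (le_max_left i j))
      j (Nat.lt_succ_of_le (le_max_right i j))
  have hnorm : ∀ i, ‖f i‖ * ‖z i - K (u i)‖ ≤ (1/2 : ℝ)^i :=
    fun i => (hinv (i+1)).2.2.2.1 i (Nat.lt_succ_self i)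
  have hspan : ∀ i, z i ∉ span ℝ (z '' Set.Iio i) :=
    fun i => (hinv (i+1)).2.2.2.2 i (Nat.lt_succ_self i)
  set v : ℕ → Y := fun i => z i - K (u i) with hv
  set gg : ℕ → (X →L[ℝ] Y) := fun i => (f i).smulRight (v i) with hgg
  have hggnorm : ∀ i, ‖gg i‖ ≤ (1/2 : ℝ)^i := by
    intro i
    rw [hgg]
    beta_reduce
    rw [ContinuousLinearMap.norm_smulRight_apply]
    exact hnorm i
  have hsummable : Summable gg := by
    apply Summable.of_norm
    apply Summable.of_nonneg_of_le (fun i => norm_nonneg _) hggnorm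
    exact summable_geometric_of_lt_one (by norm_num) (by norm_num)
  set K₁ : X →L[ℝ] Y := ∑' i, gg i with hK₁
  have hcomp : IsCompactOperator K₁ := by
    have htend : Tendsto (fun N => ∑ i ∈ Finset.range N, gg i) atTop (𝓝 K₁) :=
      hsummable.hasSum.tendsto_sum_nat
    apply isCompactOperator_of_tendsto htend
    apply Eventually.of_forall
    intro N
    induction N with
    | zero => simpa using isCompactOperator_zero
    | succ N ih =>
      rw [Finset.sum_range_succ]
      have : ⇑((∑ i ∈ Finset.range N, gg i) + gg N)
          = ⇑(∑ i ∈ Finset.range N, gg i) + ⇑(gg N) := rfl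
      rw [this]
      exact ih.add (my_smulRight_compact (f N) (v N))
  have heval : ∀ m, (K + K₁) (u m) = z m := by
    intro m
    have h1 : K₁ (u m) = ∑' i, gg i (u m) :=
      ContinuousLinearMap.map_tsum (ContinuousLinearMap.apply ℝ Y (u m)) hsummable
    have h2 : ∀ i, gg i (u m) = (if i = m then (1:ℝ) else 0) • v i := by
      intro i
      rw [hgg]
      beta_reduce
      rw [ContinuousLinearMap.smulRight_apply, hf i m]
    have h3 : (∑' i, gg i (u m)) = v m := by
      rw [tsum_congr h2]
      rw [tsum_eq_single m]
      · simp
      · intro i hi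
        simp [hi]
    rw [ContinuousLinearMap.add_apply, h1, h3, hv]
    simp
  have hzP : ∀ m, z m ∈ U.map ((K + K₁ : X →L[ℝ] Y) : X →ₗ[ℝ] Y) ⊓ L := by
    intro m
    exact Submodule.mem_inf.mpr ⟨⟨u m, huU m, heval m⟩, hzL m⟩
  refine ⟨K₁, hcomp, ?_⟩
  intro hfd
  set P : Submodule ℝ Y := U.map ((K + K₁ : X →L[ℝ] Y) : X →ₗ[ℝ] Y) ⊓ L with hP
  set dP := Module.finrank ℝ P with hdP
  -- a linearly independent family of size dP + 1 in P
  have hli : ∀ n, LinearIndependent ℝ (fun i : Fin n => z i) := by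
    intro n
    induction n with
    | zero => exact linearIndependent_empty_type
    | succ n ih =>
      have hsnoc : (fun i : Fin (n+1) => z i) = Fin.snoc (fun i : Fin n => z i) (z n) := by
        funext i
        refine Fin.lastCases ?_ ?_ i
        · rw [Fin.snoc_last]
          simp [Fin.val_last]
        · intro j
          rw [Fin.snoc_castSucc]
          simp
      rw [hsnoc]
      rw [linearIndependent_fin_snoc]
      refine ⟨ih, ?_⟩
      have hrange : Set.range (fun i : Fin n => z i) = z '' Set.Iio n := by
        ext y
        constructor
        · rintro ⟨i, rfl⟩; exact ⟨i, i.2, rfl⟩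
        · rintro ⟨j, hj, rfl⟩; exact ⟨⟨j, hj⟩, rfl⟩
      rw [hrange]
      exact hspan n
  set w : Fin (dP + 1) → ↥P := fun i => ⟨z i, hzP i⟩ with hw
  have hwli : LinearIndependent ℝ w := by
    apply LinearIndependent.of_comp P.subtype
    have : (⇑P.subtype ∘ w) = fun i : Fin (dP+1) => z i := by
      funext i; rfl
    rw [this]
    exact hli (dP + 1)
  have hcard := hwli.fintype_card_le_finrank
  rw [Fintype.card_fin] at hcard
  omega
end
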